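/- arXiv:2004.09241 — 3 statements merged into one kernel-verified Lean document; each statement's English description precedes it below -/
import Mathlib

section
/- (Normal-ordering / Wick relation, eq. (3.24) of the paper.) For all finite multisets μ, ν of positive integers one has the operator identity on P: a_ν ∘ a*_μ = ∑_{λ ⊆ ν ∩ μ} ξ_λ · a*_{μ∖λ} ∘ a_{ν∖λ}, where the sum runs over all submultisets λ of the multiset intersection ν ∩ μ and ξ_λ := (1/m(λ)!) ∏_{r∈λ} κ'_r. -/
open MvPolynomial

noncomputable section

set_option linter.unusedSectionVars false

variable (F : Type*) [Field F] [CharZero F]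

abbrev PP (F : Type*) [Field F] : Type _ := MvPolynomial ℕ+ F

/-- `a_{-r}`: multiplication by `X r`. -/
def aNeg (r : ℕ+) : Module.End F (PP F) := LinearMap.mulLeft F (X r)

/-- `a_r := κ'_r • ∂/∂X_r`. -/
def aPos (κ : ℕ+ → F) (r : ℕ+) : Module.End F (PP F) :=
  κ r • ((pderiv r : Derivation F (PP F) (PP F)) : Module.End F (PP F))

lemma aNeg_commute (i j : ℕ+) : Commute (aNeg F i) (aNeg F j) := by
  apply LinearMap.ext
  intro p
  simp [aNeg, Module.End.mul_apply, mul_left_comm]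

lemma pderiv_commute (i j : ℕ+) :
    Commute ((pderiv i : Derivation F (PP F) (PP F)) : Module.End F (PP F))
      ((pderiv j : Derivation F (PP F) (PP F)) : Module.End F (PP F)) := by
  have h : (⁅(pderiv i : Derivation F (PP F) (PP F)),
      (pderiv j : Derivation F (PP F) (PP F))⁆ : Derivation F (PP F) (PP F)) = 0 := by
    apply derivation_ext
    intro k
    simp only [Derivation.commutator_apply, pderiv_X, Pi.single_apply, Derivation.zero_apply]
    split_ifs <;> simp
  have h2 : (⁅((pderiv i : Derivation F (PP F) (PP F)) : Module.End F (PP F)),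
      ((pderiv j : Derivation F (PP F) (PP F)) : Module.End F (PP F))⁆ : Module.End F (PP F)) = 0 := by
    rw [← Derivation.commutator_coe_linear_map, h]
    rfl
  rw [Ring.lie_def] at h2
  exact sub_eq_zero.mp h2

lemma aPos_commute (κ : ℕ+ → F) (i j : ℕ+) : Commute (aPos F κ i) (aPos F κ j) :=
  ((pderiv_commute F i j).smul_left (κ i)).smul_right (κ j)

/-- Product of a pairwise-commuting family of operators over a multiset. -/
def opProd {M : Type*} [Monoid M] (f : ℕ+ → M) (hf : ∀ i j, Commute (f i) (f j))
    (μ : Multiset ℕ+) : M :=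
  (μ.map f).noncommProd (by
    intro x hx y hy _
    obtain ⟨i, _, rfl⟩ := Multiset.mem_map.mp hx
    obtain ⟨j, _, rfl⟩ := Multiset.mem_map.mp hy
    exact hf i j)

/-- `m(μ)! := ∏_r m_r(μ)!`, the product of factorials of part multiplicities. -/
def mfact (μ : Multiset ℕ+) : ℕ := (μ.dedup.map fun r => (μ.count r).factorial).prod

/-- `|μ|`: the weight (sum of the parts) of `μ`. -/
def msum (μ : Multiset ℕ+) : ℕ := (μ.map fun r => (r : ℕ)).sum

/-- The multiset binomial coefficient `[μ ⫶ ν]`. -/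
def mbinom (μ ν : Multiset ℕ+) : F :=
  if ν ≤ μ then (mfact μ : F) / ((mfact (μ - ν) : F) * (mfact ν : F)) else 0

/-- `a*_μ := (1/m(μ)!) ∏_{r∈μ} a_{-r}`. -/
def aStar (μ : Multiset ℕ+) : Module.End F (PP F) :=
  ((mfact μ : F))⁻¹ • opProd (aNeg F) (aNeg_commute F) μ

/-- `a_μ := (1/m(μ)!) ∏_{r∈μ} a_r`. -/
def aLow (κ : ℕ+ → F) (μ : Multiset ℕ+) : Module.End F (PP F) :=
  ((mfact μ : F))⁻¹ • opProd (aPos F κ) (aPos_commute F κ) μ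

/-- `ξ_λ := (1/m(λ)!) ∏_{r∈λ} κ'_r`. -/
def xiCoef (κ : ℕ+ → F) (lam : Multiset ℕ+) : F :=
  ((mfact lam : F))⁻¹ * (lam.map κ).prod

section Helpers

variable (F : Type*) [Field F] [CharZero F]

lemma opProd_zero {M : Type*} [Monoid M] (f : ℕ+ → M) (hf) : opProd f hf 0 = 1 := rfl

lemma opProd_cons {M : Type*} [Monoid M] (f : ℕ+ → M) (hf) (r : ℕ+) (σ : Multiset ℕ+) :
    opProd f hf (r ::ₘ σ) = f r * opProd f hf σ := by
  simp [opProd, Multiset.map_cons, Multiset.noncommProd_cons]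

lemma mfact_eq_prod (σ : Multiset ℕ+) :
    mfact σ = ∏ x ∈ σ.toFinset, (σ.count x).factorial := rfl

lemma mfact_zero : mfact (0 : Multiset ℕ+) = 1 := rfl

lemma mfact_eq_prod_superset (σ : Multiset ℕ+) (s : Finset ℕ+) (h : σ.toFinset ⊆ s) :
    mfact σ = ∏ x ∈ s, (σ.count x).factorial := by
  rw [mfact_eq_prod]
  refine Finset.prod_subset h ?_
  intro x _ hx
  rw [Multiset.mem_toFinset] at hx
  simp [Multiset.count_eq_zero_of_notMem hx]

lemma mfact_cons (r : ℕ+) (σ : Multiset ℕ+) :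
    mfact (r ::ₘ σ) = (σ.count r + 1) * mfact σ := by
  classical
  have hs : (r ::ₘ σ).toFinset ⊆ insert r σ.toFinset := by
    simp [Multiset.toFinset_cons]
  have hs' : σ.toFinset ⊆ insert r σ.toFinset := Finset.subset_insert _ _
  rw [mfact_eq_prod_superset (r ::ₘ σ) _ hs, mfact_eq_prod_superset σ _ hs']
  have hr : r ∈ insert r σ.toFinset := Finset.mem_insert_self _ _
  rw [← Finset.mul_prod_erase _ _ hr, ← Finset.mul_prod_erase _ (fun x => (σ.count x).factorial) hr]
  have h1 : ∀ x ∈ (insert r σ.toFinset).erase r,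
      ((r ::ₘ σ).count x).factorial = (σ.count x).factorial := by
    intro x hx
    have : x ≠ r := Finset.ne_of_mem_erase hx
    rw [Multiset.count_cons_of_ne this]
  rw [Finset.prod_congr rfl h1, Multiset.count_cons_self, Nat.factorial_succ, mul_assoc]

lemma mfact_ne_zero (σ : Multiset ℕ+) : (mfact σ : F) ≠ 0 := by
  have : mfact σ ≠ 0 := by
    rw [mfact_eq_prod]
    exact Finset.prod_ne_zero_iff.mpr fun x _ => (Nat.factorial_pos _).ne'
  exact_mod_cast this

lemma xiCoef_zero (κ : ℕ+ → F) : xiCoef F κ 0 = 1 := by simp [xiCoef, mfact_zero]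

lemma xiCoef_cons (κ : ℕ+ → F) (r : ℕ+) (lam : Multiset ℕ+) :
    xiCoef F κ (r ::ₘ lam) * ((lam.count r : F) + 1) = xiCoef F κ lam * κ r := by
  rw [xiCoef, xiCoef, mfact_cons]
  have hm : (mfact lam : F) ≠ 0 := mfact_ne_zero F lam
  have hc : ((lam.count r : F) + 1) ≠ 0 := by
    have : ((lam.count r + 1 : ℕ) : F) ≠ 0 := Nat.cast_ne_zero.mpr (Nat.succ_ne_zero _)
    push_cast at this; exact this
  push_cast
  rw [Multiset.map_cons, Multiset.prod_cons]
  field_simp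

lemma aStar_zero : aStar F (0 : Multiset ℕ+) = 1 := by
  simp [aStar, mfact_zero, opProd_zero]

lemma aLow_zero (κ : ℕ+ → F) : aLow F κ (0 : Multiset ℕ+) = 1 := by
  simp [aLow, mfact_zero, opProd_zero]

lemma aPos_mul_aNeg (κ : ℕ+ → F) (r s : ℕ+) :
    aPos F κ r * aNeg F s =
      aNeg F s * aPos F κ r + (if r = s then κ r else 0) • (1 : Module.End F (PP F)) := by
  apply LinearMap.ext
  intro p
  simp only [aPos, aNeg, LinearMap.add_apply, Module.End.mul_apply, LinearMap.smul_apply,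
    LinearMap.mulLeft_apply, Module.End.one_apply, Derivation.coeFn_coe]
  rw [Derivation.leibniz]
  simp only [smul_eq_mul, pderiv_X]
  by_cases h : r = s
  · subst h
    simp [Pi.single_eq_same, mul_add, mul_comm]
  · rw [Pi.single_eq_of_ne (Ne.symm h)]
    simp [h, mul_comm]

lemma aPos_mul_opProd (κ : ℕ+ → F) (r : ℕ+) (σ : Multiset ℕ+) :
    aPos F κ r * opProd (aNeg F) (aNeg_commute F) σ =
      opProd (aNeg F) (aNeg_commute F) σ * aPos F κ r +
        ((σ.count r : F) * κ r) • opProd (aNeg F) (aNeg_commute F) (σ.erase r) := by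
  classical
  induction σ using Multiset.induction with
  | empty => simp [opProd_zero]
  | cons s σ ih =>
    rw [opProd_cons, ← mul_assoc, aPos_mul_aNeg, add_mul, mul_assoc, ih, mul_add,
      smul_mul_assoc, one_mul]
    by_cases h : r = s
    · subst h
      rw [Multiset.erase_cons_head, Multiset.count_cons_self, if_pos rfl]
      by_cases hr : r ∈ σ
      · have he : aNeg F r * opProd (aNeg F) (aNeg_commute F) (σ.erase r)
            = opProd (aNeg F) (aNeg_commute F) σ := by
          rw [← opProd_cons, Multiset.cons_erase hr]
        rw [mul_smul_comm, he, ← mul_assoc]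
        push_cast
        module
      · rw [Multiset.count_eq_zero_of_notMem hr, mul_smul_comm, ← mul_assoc]
        push_cast
        module
    · rw [Multiset.erase_cons_tail _ (Ne.symm h), Multiset.count_cons_of_ne h,
        if_neg h, mul_smul_comm, ← mul_assoc, opProd_cons]
      module

lemma aPos_mul_aStar (κ : ℕ+ → F) (r : ℕ+) (σ : Multiset ℕ+) :
    aPos F κ r * aStar F σ =
      aStar F σ * aPos F κ r + (if r ∈ σ then κ r • aStar F (σ.erase r) else 0) := by
  classical
  rw [aStar, mul_smul_comm, aPos_mul_opProd, smul_add, smul_mul_assoc]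
  congr 1
  by_cases hr : r ∈ σ
  · rw [if_pos hr, aStar, smul_smul, smul_smul]
    congr 1
    have hc : (σ.count r : F) ≠ 0 := by
      exact_mod_cast (Multiset.count_pos.mpr hr).ne'
    have hmf : (mfact σ : F) = (σ.count r : F) * (mfact (σ.erase r) : F) := by
      have hσ : σ = r ::ₘ σ.erase r := (Multiset.cons_erase hr).symm
      have h2 : σ.count r = (σ.erase r).count r + 1 := by
        conv_lhs => rw [hσ]
        rw [Multiset.count_cons_self]
      calc (mfact σ : F) = (mfact (r ::ₘ σ.erase r) : F) := by rw [← hσ]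
        _ = _ := by rw [mfact_cons, ← h2]; push_cast; ring
    rw [hmf]
    field_simp
  · rw [if_neg hr, Multiset.count_eq_zero_of_notMem hr]
    push_cast
    simp

lemma aPos_mul_aLow (κ : ℕ+ → F) (r : ℕ+) (σ : Multiset ℕ+) :
    aPos F κ r * aLow F κ σ = ((σ.count r : F) + 1) • aLow F κ (r ::ₘ σ) := by
  rw [aLow, aLow, mfact_cons, mul_smul_comm, opProd_cons, smul_smul]
  congr 1
  have h1 : ((σ.count r : F) + 1) ≠ 0 := by
    have : ((σ.count r + 1 : ℕ) : F) ≠ 0 := Nat.cast_ne_zero.mpr (Nat.succ_ne_zero _)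
    push_cast at this; exact this
  push_cast
  field_simp [mfact_ne_zero F σ]

end Helpers

lemma xiCoef_erase (κ : ℕ+ → F) (r : ℕ+) (σ : Multiset ℕ+) (hr : r ∈ σ) :
    xiCoef F κ (σ.erase r) * κ r = xiCoef F κ σ * (σ.count r : F) := by
  have h := xiCoef_cons F κ r (σ.erase r)
  rw [Multiset.cons_erase hr] at h
  have hc : (σ.count r : F) = ((σ.erase r).count r : F) + 1 := by
    have : σ.count r = (σ.erase r).count r + 1 := by
      conv_lhs => rw [← Multiset.cons_erase hr, Multiset.count_cons_self]
    rw [this]; push_cast; ring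
  rw [hc, ← h]

/-- normal-ordering / Wick relation, eq. (3.24) of the paper:
`a_ν ∘ a*_μ = ∑_{λ ⊆ ν ∩ μ} ξ_λ · a*_{μ∖λ} ∘ a_{ν∖λ}`, where the sum runs over
all submultisets `λ` of the multiset intersection `ν ∩ μ`. -/
theorem statement2 (F : Type*) [Field F] [CharZero F] (κ : ℕ+ → F)
    (μ ν : Multiset ℕ+) :
    aLow F κ ν * aStar F μ =
      ∑ lam ∈ ((ν ∩ μ).powerset.toFinset),
        xiCoef F κ lam • (aStar F (μ - lam) * aLow F κ (ν - lam)) := by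
  classical
  induction ν using Multiset.induction with
  | empty =>
    rw [aLow_zero, one_mul, Multiset.zero_inter, Multiset.powerset_zero,
      Multiset.toFinset_singleton, Finset.sum_singleton, Multiset.sub_zero,
      Multiset.sub_zero, xiCoef_zero, aLow_zero, mul_one, one_smul]
  | cons r ν ih =>
    have hmemP : ∀ lam : Multiset ℕ+,
        lam ∈ (ν ∩ μ).powerset.toFinset ↔ lam ≤ ν ∧ lam ≤ μ := by
      intro lam
      rw [Multiset.mem_toFinset, Multiset.mem_powerset, Multiset.le_inter_iff]
    have hmemP' : ∀ lam : Multiset ℕ+,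
        lam ∈ ((r ::ₘ ν) ∩ μ).powerset.toFinset ↔ lam ≤ r ::ₘ ν ∧ lam ≤ μ := by
      intro lam
      rw [Multiset.mem_toFinset, Multiset.mem_powerset, Multiset.le_inter_iff]
    have hn : ((ν.count r : F) + 1) ≠ 0 := by
      have h0 : ((ν.count r + 1 : ℕ) : F) ≠ 0 := Nat.cast_ne_zero.mpr (Nat.succ_ne_zero _)
      push_cast at h0; exact h0
    have hstep : aLow F κ (r ::ₘ ν) = ((ν.count r : F) + 1)⁻¹ • (aPos F κ r * aLow F κ ν) := by
      rw [aPos_mul_aLow, smul_smul, inv_mul_cancel₀ hn, one_smul]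
    rw [hstep, smul_mul_assoc, mul_assoc, ih, Finset.mul_sum]
    have hterm : ∀ lam ∈ (ν ∩ μ).powerset.toFinset,
        aPos F κ r * (xiCoef F κ lam • (aStar F (μ - lam) * aLow F κ (ν - lam))) =
          (xiCoef F κ lam * (((ν - lam).count r : F) + 1)) •
              (aStar F (μ - lam) * aLow F κ ((r ::ₘ ν) - lam)) +
            (if r ∈ μ - lam then (xiCoef F κ lam * κ r) •
              (aStar F (μ - (r ::ₘ lam)) * aLow F κ ((r ::ₘ ν) - (r ::ₘ lam))) else 0) := by
      intro lam hlam
      obtain ⟨hlν, hlμ⟩ := (hmemP lam).mp hlam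
      have hsub1 : r ::ₘ (ν - lam) = (r ::ₘ ν) - lam := by
        have hc := (Multiset.le_iff_count.mp hlν) r
        ext a
        by_cases ha : a = r
        · subst ha
          simp only [Multiset.count_cons_self, Multiset.count_sub, Multiset.count_cons_self]
          omega
        · simp [Multiset.count_cons_of_ne ha, Multiset.count_sub]
      have hsub3 : ν - lam = (r ::ₘ ν) - (r ::ₘ lam) := by
        ext a
        by_cases ha : a = r
        · subst ha
          simp only [Multiset.count_sub, Multiset.count_cons_self]
          omega
        · simp [Multiset.count_cons_of_ne ha, Multiset.count_sub]
      rw [mul_smul_comm, ← mul_assoc, aPos_mul_aStar, add_mul, mul_assoc,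
        aPos_mul_aLow, smul_add]
      congr 1
      · rw [hsub1, mul_smul_comm, smul_smul]
      · by_cases hr : r ∈ μ - lam
        · rw [if_pos hr, if_pos hr]
          have hsub2 : (μ - lam).erase r = μ - (r ::ₘ lam) := by
            rw [← Multiset.sub_singleton]
            ext a
            by_cases ha : a = r
            · subst ha
              simp only [Multiset.count_sub, Multiset.count_singleton_self,
                Multiset.count_cons_self]
              omega
            · simp [Multiset.count_sub, Multiset.count_singleton,
                Multiset.count_cons_of_ne ha, ha]
          rw [hsub2, ← hsub3, smul_mul_assoc, smul_smul]
        · rw [if_neg hr, if_neg hr, zero_mul, smul_zero]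
    rw [Finset.sum_congr rfl hterm, Finset.sum_add_distrib]
    have hPsub : (ν ∩ μ).powerset.toFinset ⊆ ((r ::ₘ ν) ∩ μ).powerset.toFinset := by
      intro σ hσ
      obtain ⟨h1, h2⟩ := (hmemP σ).mp hσ
      exact (hmemP' σ).mpr ⟨h1.trans (Multiset.le_cons_self ν r), h2⟩
    have hsum1 : (∑ lam ∈ (ν ∩ μ).powerset.toFinset,
        (xiCoef F κ lam * (((ν - lam).count r : F) + 1)) •
          (aStar F (μ - lam) * aLow F κ ((r ::ₘ ν) - lam))) =
        ∑ σ ∈ ((r ::ₘ ν) ∩ μ).powerset.toFinset,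
          (xiCoef F κ σ * (((ν.count r : F) + 1) - (σ.count r : F))) •
            (aStar F (μ - σ) * aLow F κ ((r ::ₘ ν) - σ)) := by
      rw [Finset.sum_congr rfl (g := fun σ =>
          (xiCoef F κ σ * (((ν.count r : F) + 1) - (σ.count r : F))) •
            (aStar F (μ - σ) * aLow F κ ((r ::ₘ ν) - σ))) ?_]
      · refine Finset.sum_subset hPsub ?_
        intro σ hσ' hσ
        obtain ⟨h1, h2⟩ := (hmemP' σ).mp hσ'
        have hcnt : σ.count r = ν.count r + 1 := by
          have h3 : ¬ σ ≤ ν := fun hle => hσ ((hmemP σ).mpr ⟨hle, h2⟩)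
          rw [Multiset.le_iff_count] at h3
          push_neg at h3
          obtain ⟨a, ha⟩ := h3
          have h4 := (Multiset.le_iff_count.mp h1) a
          by_cases har : a = r
          · subst har
            rw [Multiset.count_cons_self] at h4
            omega
          · rw [Multiset.count_cons_of_ne har] at h4
            omega
        rw [hcnt]
        push_cast
        rw [sub_self, mul_zero, zero_smul]
      · intro σ hσ
        obtain ⟨h1, h2⟩ := (hmemP σ).mp hσ
        have hle : σ.count r ≤ ν.count r := (Multiset.le_iff_count.mp h1) r
        congr 2
        rw [Multiset.count_sub, Nat.cast_sub hle]
        ring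
    have hsum2 : (∑ lam ∈ (ν ∩ μ).powerset.toFinset,
        if r ∈ μ - lam then (xiCoef F κ lam * κ r) •
          (aStar F (μ - (r ::ₘ lam)) * aLow F κ ((r ::ₘ ν) - (r ::ₘ lam))) else 0) =
        ∑ σ ∈ ((r ::ₘ ν) ∩ μ).powerset.toFinset,
          (xiCoef F κ σ * (σ.count r : F)) •
            (aStar F (μ - σ) * aLow F κ ((r ::ₘ ν) - σ)) := by
      rw [← Finset.sum_filter]
      have hbij : (∑ lam ∈ (ν ∩ μ).powerset.toFinset.filter (fun lam => r ∈ μ - lam),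
          (xiCoef F κ lam * κ r) •
            (aStar F (μ - (r ::ₘ lam)) * aLow F κ ((r ::ₘ ν) - (r ::ₘ lam)))) =
          ∑ σ ∈ ((r ::ₘ ν) ∩ μ).powerset.toFinset.filter (fun σ => r ∈ σ),
            (xiCoef F κ σ * (σ.count r : F)) •
              (aStar F (μ - σ) * aLow F κ ((r ::ₘ ν) - σ)) := by
        refine Finset.sum_nbij' (fun lam => r ::ₘ lam) (fun σ => σ.erase r) ?_ ?_ ?_ ?_ ?_
        · intro lam hlam
          rw [Finset.mem_filter] at hlam ⊢
          obtain ⟨hlam, hrm⟩ := hlam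
          obtain ⟨h1, h2⟩ := (hmemP lam).mp hlam
          have hrc : lam.count r < μ.count r := by
            have := Multiset.count_pos.mpr hrm
            rw [Multiset.count_sub] at this
            omega
          refine ⟨(hmemP' _).mpr ⟨?_, ?_⟩, Multiset.mem_cons_self r lam⟩
          · exact Multiset.cons_le_cons r h1
          · rw [Multiset.le_iff_count]
            intro a
            by_cases ha : a = r
            · subst ha
              rw [Multiset.count_cons_self]
              omega
            · rw [Multiset.count_cons_of_ne ha]
              exact (Multiset.le_iff_count.mp h2) a
        · intro σ hσ
          rw [Finset.mem_filter] at hσ ⊢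
          obtain ⟨hσ, hrσ⟩ := hσ
          obtain ⟨h1, h2⟩ := (hmemP' σ).mp hσ
          have hpos : 0 < σ.count r := Multiset.count_pos.mpr hrσ
          have hμc : σ.count r ≤ μ.count r := (Multiset.le_iff_count.mp h2) r
          refine ⟨(hmemP _).mpr ⟨?_, ?_⟩, ?_⟩
          · rw [Multiset.le_iff_count]
            intro a
            have h4 := (Multiset.le_iff_count.mp h1) a
            by_cases ha : a = r
            · subst ha
              rw [Multiset.count_erase_self]
              rw [Multiset.count_cons_self] at h4
              omega
            · rw [Multiset.count_erase_of_ne ha]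
              rw [Multiset.count_cons_of_ne ha] at h4
              exact h4
          · exact (Multiset.erase_le r σ).trans h2
          · rw [← Multiset.count_pos, Multiset.count_sub, Multiset.count_erase_self]
            omega
        · intro lam _
          exact Multiset.erase_cons_head r lam
        · intro σ hσ
          rw [Finset.mem_filter] at hσ
          exact Multiset.cons_erase hσ.2
        · intro lam hlam
          rw [Finset.mem_filter] at hlam
          have hxi : xiCoef F κ lam * κ r =
              xiCoef F κ (r ::ₘ lam) * ((r ::ₘ lam).count r : F) := by
            have := xiCoef_erase F κ r (r ::ₘ lam) (Multiset.mem_cons_self r lam)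
            rw [Multiset.erase_cons_head] at this
            exact this
          rw [hxi]
      rw [hbij]
      refine Finset.sum_subset (Finset.filter_subset _ _) ?_
      intro σ hσP hσ
      rw [Finset.mem_filter, not_and] at hσ
      have hns : r ∉ σ := hσ hσP
      rw [Multiset.count_eq_zero_of_notMem hns]
      push_cast
      rw [mul_zero, zero_smul]
    rw [hsum1, hsum2, ← Finset.sum_add_distrib, Finset.smul_sum]
    refine Finset.sum_congr rfl ?_
    intro σ hσ
    rw [← add_smul, smul_smul]
    congr 1
    field_simp
    ring
end
end

section
/- (Operator form of Proposition 4.2: commutation with the coproduct images of the Heisenberg generators forces the coefficient recursion.) Assume κ'_r ≠ 0 for all r ≥ 1 and q ∈ F is invertible. Let F(μ,ρ,ν,σ) ∈ F be a finitely supported family indexed by quadruples of finite multisets of positive integers and set T := ∑ F(μ,ρ,ν,σ) · (a*_μ ∘ a_ν) ⊗ (a*_ρ ∘ a_σ), an F-linear endomorphism of P ⊗_F P. (a) If T commutes with a_r ⊗ id + q^{−r} (id ⊗ a_r) for every r ≥ 1, then F(μ + {r}, ρ, ν, σ) + q^{−r} F(μ, ρ + {r}, ν, σ) = 0 for all r,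 μ, ρ, ν, σ. (b) If T commutes with q^r (a_{−r} ⊗ id) + id ⊗ a_{−r} for every r ≥ 1, then F(μ, ρ, ν + {r}, σ) + q^{−r} F(μ, ρ, ν, σ + {r}) = 0 for all r, μ, ρ, ν, σ. -/
open MvPolynomial

noncomputable section

set_option linter.unusedSectionVars false

variable (F : Type*) [Field F] [CharZero F]

open scoped TensorProduct

/-- `f ⊗ id` acting on `P ⊗ P`. -/
def op1 (f : Module.End F (PP F)) : Module.End F (PP F ⊗[F] PP F) :=
  TensorProduct.map f LinearMap.id

/-- `id ⊗ g` acting on `P ⊗ P`. -/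
def op2 (g : Module.End F (PP F)) : Module.End F (PP F ⊗[F] PP F) :=
  TensorProduct.map LinearMap.id g

lemma op1_mul (f f' : Module.End F (PP F)) : op1 F (f * f') = op1 F f * op1 F f' := by
  simp only [op1, Module.End.mul_eq_comp, ← TensorProduct.map_comp, LinearMap.comp_id]

lemma op2_mul (g g' : Module.End F (PP F)) : op2 F (g * g') = op2 F g * op2 F g' := by
  simp only [op2, Module.End.mul_eq_comp, ← TensorProduct.map_comp, LinearMap.comp_id]

lemma op1_op2_commute (f g : Module.End F (PP F)) : Commute (op1 F f) (op2 F g) := by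
  unfold op1 op2
  rw [Commute, SemiconjBy, Module.End.mul_eq_comp, Module.End.mul_eq_comp,
    ← TensorProduct.map_comp, ← TensorProduct.map_comp]
  simp

lemma op1_commute {f f' : Module.End F (PP F)} (h : Commute f f') :
    Commute (op1 F f) (op1 F f') := by
  rw [Commute, SemiconjBy, ← op1_mul, ← op1_mul, h.eq]

lemma op2_commute {g g' : Module.End F (PP F)} (h : Commute g g') :
    Commute (op2 F g) (op2 F g') := by
  rw [Commute, SemiconjBy, ← op2_mul, ← op2_mul, h.eq]

variable (q : F)

/-- `b_r := a_r ⊗ id + q^{-r} (id ⊗ a_r)`. -/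
def bPos (κ : ℕ+ → F) (r : ℕ+) : Module.End F (PP F ⊗[F] PP F) :=
  op1 F (aPos F κ r) + (q⁻¹) ^ (r : ℕ) • op2 F (aPos F κ r)

/-- `b_{-r} := a_{-r} ⊗ id + q^{-r} (id ⊗ a_{-r})`. -/
def bNeg (r : ℕ+) : Module.End F (PP F ⊗[F] PP F) :=
  op1 F (aNeg F r) + (q⁻¹) ^ (r : ℕ) • op2 F (aNeg F r)

/-- `c_r := q^{-r} (a_r ⊗ id) - id ⊗ a_r`. -/
def cPos (κ : ℕ+ → F) (r : ℕ+) : Module.End F (PP F ⊗[F] PP F) :=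
  (q⁻¹) ^ (r : ℕ) • op1 F (aPos F κ r) - op2 F (aPos F κ r)

/-- `c_{-r} := q^{-r} (a_{-r} ⊗ id) - id ⊗ a_{-r}`. -/
def cNeg (r : ℕ+) : Module.End F (PP F ⊗[F] PP F) :=
  (q⁻¹) ^ (r : ℕ) • op1 F (aNeg F r) - op2 F (aNeg F r)

lemma commute_aux {A B C D : Module.End F (PP F ⊗[F] PP F)} {x y : F}
    (hAC : Commute A C) (hAD : Commute A D) (hBC : Commute B C) (hBD : Commute B D) :
    Commute (x • A - B) (y • C - D) := by
  have eAC := LinearMap.congr_fun hAC.eq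
  have eAD := LinearMap.congr_fun hAD.eq
  have eBC := LinearMap.congr_fun hBC.eq
  have eBD := LinearMap.congr_fun hBD.eq
  simp only [Module.End.mul_apply] at eAC eAD eBC eBD
  rw [Commute, SemiconjBy]
  apply LinearMap.ext
  intro v
  simp only [Module.End.mul_apply, LinearMap.sub_apply, LinearMap.smul_apply, map_sub, map_smul,
    eAC, eAD, eBC, eBD]
  simp only [smul_sub, smul_comm y x]
  abel

lemma cNeg_commute (i j : ℕ+) : Commute (cNeg F q i) (cNeg F q j) := by
  unfold cNeg
  exact commute_aux F (op1_commute F (aNeg_commute F i j))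
    (op1_op2_commute F (aNeg F i) (aNeg F j)) (op1_op2_commute F (aNeg F j) (aNeg F i)).symm
    (op2_commute F (aNeg_commute F i j))

lemma cPos_commute (κ : ℕ+ → F) (i j : ℕ+) : Commute (cPos F q κ i) (cPos F q κ j) := by
  unfold cPos
  exact commute_aux F (op1_commute F (aPos_commute F κ i j))
    (op1_op2_commute F (aPos F κ i) (aPos F κ j))
    (op1_op2_commute F (aPos F κ j) (aPos F κ i)).symm
    (op2_commute F (aPos_commute F κ i j))

/-- `c*_μ := (1/m(μ)!) ∏_{r∈μ} c_{-r}`. -/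
def cStar (μ : Multiset ℕ+) : Module.End F (PP F ⊗[F] PP F) :=
  ((mfact μ : F))⁻¹ • opProd (cNeg F q) (cNeg_commute F q) μ

/-- `c_μ := (1/m(μ)!) ∏_{r∈μ} c_r`. -/
def cLow (κ : ℕ+ → F) (μ : Multiset ℕ+) : Module.End F (PP F ⊗[F] PP F) :=
  ((mfact μ : F))⁻¹ • opProd (cPos F q κ) (cPos_commute F q κ) μ

/-- The operator `T = ∑ F(μ,ρ,ν,σ) (a*_μ ∘ a_ν) ⊗ (a*_ρ ∘ a_σ)` built from a finitely
supported coefficient family indexed by quadruples `(μ, ρ, ν, σ)`. -/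
def Tmat (κ : ℕ+ → F)
    (c : (Multiset ℕ+ × Multiset ℕ+ × Multiset ℕ+ × Multiset ℕ+) →₀ F) :
    Module.End F (PP F ⊗[F] PP F) :=
  c.sum fun p coef =>
    coef • TensorProduct.map (aStar F p.1 * aLow F κ p.2.2.1) (aStar F p.2.1 * aLow F κ p.2.2.2)


/-! ### Auxiliary development for statement7 -/

namespace S7

abbrev Q : Type := Multiset ℕ+ × Multiset ℕ+ × Multiset ℕ+ × Multiset ℕ+

/-- The monomial `∏_{r∈λ} X_r`. -/
def Xm (lam : Multiset ℕ+) : PP F := MvPolynomial.monomial (Multiset.toFinsupp lam) 1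

lemma toFinsupp_cons (r : ℕ+) (s : Multiset ℕ+) :
    Multiset.toFinsupp (r ::ₘ s) = Multiset.toFinsupp s + Finsupp.single r 1 := by
  ext a
  simp [Multiset.count_cons, Finsupp.single_apply, eq_comm]

lemma Xm_cons (r : ℕ+) (s : Multiset ℕ+) :
    Xm F (r ::ₘ s) = MvPolynomial.X r * Xm F s := by
  rw [Xm, Xm, MvPolynomial.X, MvPolynomial.monomial_mul, toFinsupp_cons]
  rw [add_comm]
  simp

lemma mfact_eq_prod (μ : Multiset ℕ+) :
    mfact μ = ∏ r ∈ μ.toFinset, (μ.count r).factorial := by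
  rfl

lemma mfact_pos (μ : Multiset ℕ+) : 0 < mfact μ := by
  rw [mfact_eq_prod]
  exact Finset.prod_pos fun r _ => Nat.factorial_pos _

lemma mfact_cast_ne_zero (μ : Multiset ℕ+) : (mfact μ : F) ≠ 0 := by
  exact Nat.cast_ne_zero.mpr (Nat.pos_iff_ne_zero.mp (mfact_pos μ))

lemma mfact_cons (r : ℕ+) (μ : Multiset ℕ+) :
    mfact (r ::ₘ μ) = (μ.count r + 1) * mfact μ := by
  rw [mfact_eq_prod, mfact_eq_prod, Multiset.toFinset_cons]
  by_cases h : r ∈ μ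
  · have hr : r ∈ μ.toFinset := Multiset.mem_toFinset.mpr h
    rw [Finset.insert_eq_self.mpr hr]
    rw [← Finset.mul_prod_erase _ _ hr, ← Finset.mul_prod_erase _ _ hr]
    have h1 : ∀ a ∈ μ.toFinset.erase r,
        ((r ::ₘ μ).count a).factorial = (μ.count a).factorial := by
      intro a ha
      rw [Multiset.count_cons_of_ne (Finset.ne_of_mem_erase ha)]
    rw [Finset.prod_congr rfl h1, Multiset.count_cons_self, Nat.factorial_succ, mul_assoc]
  · have hr : r ∉ μ.toFinset := fun hc => h (Multiset.mem_toFinset.mp hc)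
    rw [Finset.prod_insert hr, Multiset.count_cons_self,
      Multiset.count_eq_zero_of_notMem h]
    have h1 : ∀ a ∈ μ.toFinset,
        ((r ::ₘ μ).count a).factorial = (μ.count a).factorial := by
      intro a ha
      rw [Multiset.count_cons_of_ne]
      rintro rfl
      exact hr ha
    rw [Finset.prod_congr rfl h1]
    simp

lemma mfact_erase {r : ℕ+} {μ : Multiset ℕ+} (h : r ∈ μ) :
    mfact μ = μ.count r * mfact (μ.erase r) := by
  conv_lhs => rw [← Multiset.cons_erase h]
  rw [mfact_cons, Multiset.count_erase_self]
  congr 1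
  have := Multiset.one_le_count_iff_mem.mpr h
  omega

end S7

namespace S7

variable {F : Type*} [Field F] [CharZero F]

/-- The scalar by which `∏_{r∈ν} κ_r ∂_r` acts on the monomial `X^λ`. -/
def dscal (κ : ℕ+ → F) (ν lam : Multiset ℕ+) : F :=
  ∏ r ∈ ν.toFinset,
    (κ r ^ ν.count r * ((lam.count r).descFactorial (ν.count r) : F))

lemma dscal_zero (κ : ℕ+ → F) (lam : Multiset ℕ+) : dscal κ 0 lam = 1 := by
  simp [dscal]

lemma dscal_cons (κ : ℕ+ → F) (r : ℕ+) (ν lam : Multiset ℕ+) :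
    dscal κ (r ::ₘ ν) lam
      = κ r * ((lam.count r - ν.count r : ℕ) : F) * dscal κ ν lam := by
  rw [dscal, dscal, Multiset.toFinset_cons]
  by_cases h : r ∈ ν
  · have hr : r ∈ ν.toFinset := Multiset.mem_toFinset.mpr h
    rw [Finset.insert_eq_self.mpr hr]
    rw [← Finset.mul_prod_erase _ _ hr, ← Finset.mul_prod_erase _ _ hr]
    have h1 : ∀ a ∈ ν.toFinset.erase r,
        κ a ^ (r ::ₘ ν).count a * (((lam.count a).descFactorial ((r ::ₘ ν).count a) : ℕ) : F)
          = κ a ^ ν.count a * (((lam.count a).descFactorial (ν.count a) : ℕ) : F) := by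
      intro a ha
      rw [Multiset.count_cons_of_ne (Finset.ne_of_mem_erase ha)]
    rw [Finset.prod_congr rfl h1, Multiset.count_cons_self, Nat.descFactorial_succ,
      pow_succ]
    push_cast
    ring
  · have hr : r ∉ ν.toFinset := fun hc => h (Multiset.mem_toFinset.mp hc)
    rw [Finset.prod_insert hr, Multiset.count_cons_self,
      Multiset.count_eq_zero_of_notMem h]
    have h1 : ∀ a ∈ ν.toFinset,
        κ a ^ (r ::ₘ ν).count a * (((lam.count a).descFactorial ((r ::ₘ ν).count a) : ℕ) : F)
          = κ a ^ ν.count a * (((lam.count a).descFactorial (ν.count a) : ℕ) : F) := by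
      intro a ha
      rw [Multiset.count_cons_of_ne]
      rintro rfl
      exact hr ha
    rw [Finset.prod_congr rfl h1]
    simp [Nat.descFactorial_succ]

lemma dscal_eq_zero_of_not_le (κ : ℕ+ → F) {ν lam : Multiset ℕ+} (h : ¬ ν ≤ lam) :
    dscal κ ν lam = 0 := by
  rw [Multiset.le_iff_count] at h
  push_neg at h
  obtain ⟨a, ha⟩ := h
  have ha0 : 0 < ν.count a := lt_of_le_of_lt (Nat.zero_le _) ha
  have hmem : a ∈ ν.toFinset := Multiset.mem_toFinset.mpr (Multiset.count_pos.mp ha0)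
  apply Finset.prod_eq_zero hmem
  rw [Nat.descFactorial_eq_zero_iff_lt.mpr ha]
  simp

lemma dscal_self_ne_zero (κ : ℕ+ → F) (hκ : ∀ r, κ r ≠ 0) (ν : Multiset ℕ+) :
    dscal κ ν ν ≠ 0 := by
  rw [dscal]
  rw [Finset.prod_ne_zero_iff]
  intro a _
  rw [Nat.descFactorial_self]
  exact mul_ne_zero (pow_ne_zero _ (hκ a)) (Nat.cast_ne_zero.mpr (Nat.factorial_ne_zero _))

lemma dscal_le (κ : ℕ+ → F) {ν lam : Multiset ℕ+} (h : dscal κ ν lam ≠ 0) : ν ≤ lam := by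
  by_contra hc
  exact h (dscal_eq_zero_of_not_le κ hc)

end S7

namespace S7

variable {F : Type*} [Field F] [CharZero F]

lemma opProd_zero {M : Type*} [Monoid M] (f : ℕ+ → M) (hf : ∀ i j, Commute (f i) (f j)) :
    opProd f hf 0 = 1 := by
  simp [opProd]

lemma opProd_cons {M : Type*} [Monoid M] (f : ℕ+ → M) (hf : ∀ i j, Commute (f i) (f j))
    (a : ℕ+) (s : Multiset ℕ+) :
    opProd f hf (a ::ₘ s) = f a * opProd f hf s := by
  simp only [opProd, Multiset.map_cons]
  rw [Multiset.noncommProd_cons]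

lemma opProd_commute {M : Type*} [Monoid M] (f : ℕ+ → M) (hf : ∀ i j, Commute (f i) (f j))
    (s : Multiset ℕ+) (y : M) (hy : ∀ i, Commute y (f i)) :
    Commute y (opProd f hf s) := by
  apply Multiset.noncommProd_commute
  intro x hx
  obtain ⟨i, _, rfl⟩ := Multiset.mem_map.mp hx
  exact hy i

lemma toFinsupp_erase (r : ℕ+) (lam : Multiset ℕ+) :
    Multiset.toFinsupp lam - Finsupp.single r 1 = Multiset.toFinsupp (lam.erase r) := by
  ext a
  by_cases h : a = r
  · subst h
    simp [Finsupp.tsub_apply, Multiset.count_erase_self, Finsupp.single_apply]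
  · simp only [Finsupp.tsub_apply, Multiset.toFinsupp_apply, Finsupp.single_apply,
      Multiset.count_erase_of_ne h, if_neg (fun hc : r = a => h hc.symm), Nat.sub_zero]

lemma aPos_Xm (κ : ℕ+ → F) (r : ℕ+) (lam : Multiset ℕ+) :
    aPos F κ r (Xm F lam) = (κ r * (lam.count r : F)) • Xm F (lam.erase r) := by
  rw [Xm, aPos]
  simp only [LinearMap.smul_apply, Derivation.coeFn_coe, MvPolynomial.pderiv_monomial, one_mul]
  rw [toFinsupp_erase]
  rw [mul_smul]
  congr 1
  rw [Xm, MvPolynomial.smul_monomial]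
  simp [Multiset.toFinsupp_apply]

lemma opProd_aNeg_Xm (μ lam : Multiset ℕ+) :
    opProd (aNeg F) (aNeg_commute F) μ (Xm F lam) = Xm F (μ + lam) := by
  induction μ using Multiset.induction_on with
  | empty => simp [opProd_zero]
  | cons a s ih =>
    rw [opProd_cons, Module.End.mul_apply, ih, Multiset.cons_add, Xm_cons]
    rfl

lemma sub_erase (lam ν : Multiset ℕ+) (r : ℕ+) :
    (lam - ν).erase r = lam - (r ::ₘ ν) := by
  ext a
  by_cases h : a = r
  · subst h
    simp only [Multiset.count_erase_self, Multiset.count_sub, Multiset.count_cons_self]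
    omega
  · simp only [Multiset.count_erase_of_ne h, Multiset.count_sub,
      Multiset.count_cons_of_ne h]

lemma opProd_aPos_Xm (κ : ℕ+ → F) (ν lam : Multiset ℕ+) :
    opProd (aPos F κ) (aPos_commute F κ) ν (Xm F lam)
      = dscal κ ν lam • Xm F (lam - ν) := by
  induction ν using Multiset.induction_on with
  | empty => simp [opProd_zero, dscal_zero]
  | cons a s ih =>
    rw [opProd_cons, Module.End.mul_apply, ih, map_smul, aPos_Xm, sub_erase,
      dscal_cons, smul_smul, Multiset.count_sub]
    ring_nf

lemma aStar_aLow_Xm (κ : ℕ+ → F) (μ ν lam : Multiset ℕ+) :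
    (aStar F μ * aLow F κ ν) (Xm F lam)
      = (((mfact μ : F))⁻¹ * ((mfact ν : F))⁻¹ * dscal κ ν lam) • Xm F (μ + (lam - ν)) := by
  rw [Module.End.mul_apply, aLow, aStar]
  simp only [LinearMap.smul_apply, map_smul]
  rw [opProd_aPos_Xm, map_smul, opProd_aNeg_Xm, smul_smul, smul_smul]
  ring_nf

end S7

namespace S7

open scoped TensorProduct

variable {F : Type*} [Field F] [CharZero F]

lemma coeff_Xm (t s : Multiset ℕ+) :
    MvPolynomial.coeff (Multiset.toFinsupp t) (Xm F s) = if s = t then (1 : F) else 0 := by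
  rw [Xm, MvPolynomial.coeff_monomial]
  congr 1
  simp only [eq_iff_iff]
  exact ⟨fun h => Multiset.toFinsupp.injective h, fun h => by rw [h]⟩

/-- Extraction of the coefficient of `X^{t1} ⊗ X^{t2}`. -/
def phiF (t1 t2 : Multiset ℕ+) : (PP F ⊗[F] PP F) →ₗ[F] F :=
  (TensorProduct.lid F F).toLinearMap ∘ₗ
    TensorProduct.map (MvPolynomial.lcoeff F (Multiset.toFinsupp t1))
      (MvPolynomial.lcoeff F (Multiset.toFinsupp t2))

lemma phiF_tmul (t1 t2 : Multiset ℕ+) (x y : PP F) :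
    phiF t1 t2 (x ⊗ₜ[F] y)
      = MvPolynomial.coeff (Multiset.toFinsupp t1) x
        * MvPolynomial.coeff (Multiset.toFinsupp t2) y := by
  simp [phiF, MvPolynomial.lcoeff_apply, smul_eq_mul]

/-- The basic operator attached to a quadruple. -/
def Mop (κ : ℕ+ → F) (p : Q) : Module.End F (PP F ⊗[F] PP F) :=
  TensorProduct.map (aStar F p.1 * aLow F κ p.2.2.1) (aStar F p.2.1 * aLow F κ p.2.2.2)

lemma Tmat_eq_sum (κ : ℕ+ → F) (c : Q →₀ F) :
    Tmat F κ c = ∑ p ∈ c.support, c p • Mop κ p := rfl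

/-- The coefficient of `X^{t1} ⊗ X^{t2}` in `Mop p (X^α ⊗ X^β)`. -/
def evc (κ : ℕ+ → F) (p : Q) (α β t1 t2 : Multiset ℕ+) : F :=
  (((mfact p.1 : F))⁻¹ * ((mfact p.2.2.1 : F))⁻¹ * dscal κ p.2.2.1 α)
    * (((mfact p.2.1 : F))⁻¹ * ((mfact p.2.2.2 : F))⁻¹ * dscal κ p.2.2.2 β)
    * (if p.1 + (α - p.2.2.1) = t1 then (1:F) else 0)
    * (if p.2.1 + (β - p.2.2.2) = t2 then (1:F) else 0)

lemma phiF_Mop (κ : ℕ+ → F) (p : Q) (α β t1 t2 : Multiset ℕ+) :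
    phiF t1 t2 (Mop κ p (Xm F α ⊗ₜ[F] Xm F β)) = evc κ p α β t1 t2 := by
  rw [Mop, TensorProduct.map_tmul, aStar_aLow_Xm, aStar_aLow_Xm]
  rw [← TensorProduct.smul_tmul', TensorProduct.tmul_smul, map_smul, map_smul, phiF_tmul,
    coeff_Xm, coeff_Xm, evc]
  simp only [smul_eq_mul]
  ring

lemma evc_self_ne_zero (κ : ℕ+ → F) (hκ : ∀ r, κ r ≠ 0) (p : Q) :
    evc κ p p.2.2.1 p.2.2.2 p.1 p.2.1 ≠ 0 := by
  have h1 : ∀ s : Multiset ℕ+, s - s = 0 := fun s => by simp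
  rw [evc, h1, h1, add_zero, add_zero, if_pos rfl, if_pos rfl, mul_one, mul_one]
  exact mul_ne_zero
    (mul_ne_zero (mul_ne_zero (inv_ne_zero (mfact_cast_ne_zero _ _))
      (inv_ne_zero (mfact_cast_ne_zero _ _))) (dscal_self_ne_zero κ hκ _))
    (mul_ne_zero (mul_ne_zero (inv_ne_zero (mfact_cast_ne_zero _ _))
      (inv_ne_zero (mfact_cast_ne_zero _ _))) (dscal_self_ne_zero κ hκ _))

end S7

namespace S7

open scoped TensorProduct

variable {F : Type*} [Field F] [CharZero F]

lemma li (κ : ℕ+ → F) (hκ : ∀ r, κ r ≠ 0) (S : Finset Q) (dd : Q → F)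
    (h : ∑ p ∈ S, dd p • Mop κ p = 0) : ∀ p ∈ S, dd p = 0 := by
  have key : ∀ p₀ : Q, ∑ p ∈ S, dd p * evc κ p p₀.2.2.1 p₀.2.2.2 p₀.1 p₀.2.1 = 0 := by
    intro p₀
    have h0 := congrArg (fun T : Module.End F (PP F ⊗[F] PP F) =>
      phiF p₀.1 p₀.2.1 (T (Xm F p₀.2.2.1 ⊗ₜ[F] Xm F p₀.2.2.2))) h
    simpa only [LinearMap.sum_apply, LinearMap.smul_apply, map_sum, map_smul,
      LinearMap.zero_apply, map_zero, smul_eq_mul, phiF_Mop] using h0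
  have main : ∀ n : ℕ, ∀ p₀ ∈ S,
      Multiset.card p₀.2.2.1 + Multiset.card p₀.2.2.2 < n → dd p₀ = 0 := by
    intro n
    induction n with
    | zero => exact fun p₀ _ hlt => absurd hlt (by omega)
    | succ n ih =>
      rintro ⟨μ₀, ρ₀, ν₀, σ₀⟩ hp₀ hcard
      have hcard' : Multiset.card ν₀ + Multiset.card σ₀ < n + 1 := hcard
      have hs := key (μ₀, ρ₀, ν₀, σ₀)
      rw [Finset.sum_eq_single (μ₀, ρ₀, ν₀, σ₀)
        (fun p hp hne => ?side) (fun hno => absurd hp₀ hno)] at hs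
      · exact (mul_eq_zero.mp hs).resolve_right (evc_self_ne_zero κ hκ (μ₀, ρ₀, ν₀, σ₀))
      obtain ⟨μ, ρ, ν, σ⟩ := p
      by_cases hz : evc κ (μ, ρ, ν, σ) ν₀ σ₀ μ₀ ρ₀ = 0
      · rw [hz, mul_zero]
      · rw [evc] at hz
        simp only [ne_eq, mul_eq_zero, not_or] at hz
        obtain ⟨⟨⟨hA, hB⟩, hi1⟩, hi2⟩ := hz
        have hν : ν ≤ ν₀ := dscal_le κ hA.2
        have hσ : σ ≤ σ₀ := dscal_le κ hB.2
        have he1 : μ + (ν₀ - ν) = μ₀ := by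
          by_contra hc; exact hi1 (if_neg hc)
        have he2 : ρ + (σ₀ - σ) = ρ₀ := by
          by_contra hc; exact hi2 (if_neg hc)
        by_cases hνσ : ν = ν₀ ∧ σ = σ₀
        · exfalso
          obtain ⟨rfl, rfl⟩ := hνσ
          apply hne
          have h1 : ∀ s : Multiset ℕ+, s - s = 0 := fun s => by simp
          rw [h1, add_zero] at he1 he2
          simp [he1, he2]
        · have hlt : Multiset.card ν + Multiset.card σ < Multiset.card ν₀ + Multiset.card σ₀ := by
            have l1 := Multiset.card_le_card hν
            have l2 := Multiset.card_le_card hσ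
            rcases (not_and_or.mp hνσ) with hne' | hne'
            · have := Multiset.card_lt_card (lt_of_le_of_ne hν hne')
              omega
            · have := Multiset.card_lt_card (lt_of_le_of_ne hσ hne')
              omega
          have : Multiset.card ν + Multiset.card σ < n := by omega
          rw [ih (μ, ρ, ν, σ) hp this, zero_mul]
  exact fun p hp => main _ p hp (Nat.lt_succ_self _)

end S7

namespace S7

variable {F : Type*} [Field F] [CharZero F]

lemma base_comm (κ : ℕ+ → F) (r s : ℕ+) :
    aPos F κ r * aNeg F s - aNeg F s * aPos F κ r
      = (if r = s then κ r else 0) • (1 : Module.End F (PP F)) := by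
  apply LinearMap.ext
  intro p
  simp only [LinearMap.sub_apply, Module.End.mul_apply, LinearMap.smul_apply,
    Module.End.one_apply, aPos, aNeg, LinearMap.mulLeft_apply, LinearMap.smul_apply,
    Derivation.coeFn_coe]
  rw [Derivation.leibniz]
  simp only [MvPolynomial.pderiv_X, smul_add, smul_smul]
  by_cases h : r = s
  · subst h
    simp [Pi.single_eq_same, MvPolynomial.smul_eq_C_mul, add_comm, mul_comm]
    ring
  · simp [Pi.single_eq_of_ne (fun hc => h hc.symm), Pi.single_eq_of_ne, h]

lemma comm1 (κ : ℕ+ → F) (r : ℕ+) (μ : Multiset ℕ+) :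
    aPos F κ r * opProd (aNeg F) (aNeg_commute F) μ
      - opProd (aNeg F) (aNeg_commute F) μ * aPos F κ r
      = (κ r * (μ.count r : F)) • opProd (aNeg F) (aNeg_commute F) (μ.erase r) := by
  induction μ using Multiset.induction_on with
  | empty => simp [opProd_zero]
  | cons a s ih =>
    rw [opProd_cons]
    have expand : aPos F κ r * (aNeg F a * opProd (aNeg F) (aNeg_commute F) s)
        - aNeg F a * opProd (aNeg F) (aNeg_commute F) s * aPos F κ r
        = (aPos F κ r * aNeg F a - aNeg F a * aPos F κ r) * opProd (aNeg F) (aNeg_commute F) s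
          + aNeg F a * (aPos F κ r * opProd (aNeg F) (aNeg_commute F) s
            - opProd (aNeg F) (aNeg_commute F) s * aPos F κ r) := by
      simp only [mul_sub, sub_mul, mul_assoc]
      abel
    rw [expand, base_comm, ih, mul_smul_comm, smul_mul_assoc, one_mul]
    by_cases h : r = a
    · subst h
      rw [if_pos rfl, Multiset.erase_cons_head, Multiset.count_cons_self]
      by_cases hm : r ∈ s
      · rw [← opProd_cons, Multiset.cons_erase hm]
        push_cast
        have hsc : κ r * ((Multiset.count r s : F) + 1)
            = κ r + κ r * (Multiset.count r s : F) := by ring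
        rw [hsc, add_smul]
      · rw [Multiset.count_eq_zero_of_notMem hm]
        simp
    · rw [if_neg h, Multiset.count_cons_of_ne h,
        Multiset.erase_cons_tail _ (fun hc => h hc.symm), opProd_cons]
      simp

lemma comm2 (κ : ℕ+ → F) (r : ℕ+) (ν : Multiset ℕ+) :
    opProd (aPos F κ) (aPos_commute F κ) ν * aNeg F r
      - aNeg F r * opProd (aPos F κ) (aPos_commute F κ) ν
      = (κ r * (ν.count r : F)) • opProd (aPos F κ) (aPos_commute F κ) (ν.erase r) := by
  induction ν using Multiset.induction_on with
  | empty => simp [opProd_zero]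
  | cons a s ih =>
    rw [opProd_cons]
    have expand : aPos F κ a * opProd (aPos F κ) (aPos_commute F κ) s * aNeg F r
        - aNeg F r * (aPos F κ a * opProd (aPos F κ) (aPos_commute F κ) s)
        = aPos F κ a * (opProd (aPos F κ) (aPos_commute F κ) s * aNeg F r
            - aNeg F r * opProd (aPos F κ) (aPos_commute F κ) s)
          + (aPos F κ a * aNeg F r - aNeg F r * aPos F κ a)
            * opProd (aPos F κ) (aPos_commute F κ) s := by
      simp only [mul_sub, sub_mul, mul_assoc]
      abel
    rw [expand, base_comm, ih, mul_smul_comm, smul_mul_assoc, one_mul]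
    by_cases h : a = r
    · subst h
      rw [if_pos rfl, Multiset.erase_cons_head, Multiset.count_cons_self]
      by_cases hm : a ∈ s
      · rw [← opProd_cons, Multiset.cons_erase hm]
        push_cast
        have hsc : κ a * ((Multiset.count a s : F) + 1)
            = κ a * (Multiset.count a s : F) + κ a := by ring
        rw [hsc, add_smul]
      · rw [Multiset.count_eq_zero_of_notMem hm]
        simp
    · rw [if_neg h, Multiset.count_cons_of_ne (fun hc => h hc.symm),
        Multiset.erase_cons_tail _ h, opProd_cons]
      simp

end S7

namespace S7

variable {F : Type*} [Field F] [CharZero F]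

lemma count_cast_ne_zero {r : ℕ+} {μ : Multiset ℕ+} (h : r ∈ μ) :
    ((μ.count r : ℕ) : F) ≠ 0 :=
  Nat.cast_ne_zero.mpr (Nat.pos_iff_ne_zero.mp (Multiset.count_pos.mpr h))

lemma smul_sub' (c : F) (A B : Module.End F (PP F)) : c • A - c • B = c • (A - B) := by
  module

lemma fcomm (κ : ℕ+ → F) (r : ℕ+) (μ ν : Multiset ℕ+) :
    aPos F κ r * (aStar F μ * aLow F κ ν) - (aStar F μ * aLow F κ ν) * aPos F κ r
      = κ r • (if r ∈ μ then aStar F (μ.erase r) * aLow F κ ν else 0) := by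
  have hQ : Commute (aPos F κ r) (opProd (aPos F κ) (aPos_commute F κ) ν) :=
    opProd_commute _ _ _ _ (fun i => aPos_commute F κ r i)
  have haux : aPos F κ r * (opProd (aNeg F) (aNeg_commute F) μ
        * opProd (aPos F κ) (aPos_commute F κ) ν)
      - opProd (aNeg F) (aNeg_commute F) μ * opProd (aPos F κ) (aPos_commute F κ) ν
        * aPos F κ r
      = ((κ r * (μ.count r : F)) • opProd (aNeg F) (aNeg_commute F) (μ.erase r))
        * opProd (aPos F κ) (aPos_commute F κ) ν := by
    rw [mul_assoc, ← hQ.eq, ← mul_assoc, ← mul_assoc, ← sub_mul, comm1]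
  rw [aStar, aLow]
  simp only [smul_mul_assoc, mul_smul_comm, smul_smul]
  rw [smul_sub', haux]
  by_cases h : r ∈ μ
  · rw [if_pos h, aStar]
    simp only [smul_mul_assoc, mul_smul_comm, smul_smul]
    congr 1
    have hm : ((mfact μ : ℕ) : F) = ((μ.count r : ℕ) : F) * ((mfact (μ.erase r) : ℕ) : F) := by
      exact_mod_cast congrArg Nat.cast (mfact_erase h)
    have h1 := mfact_cast_ne_zero (F := F) μ
    have h2 := mfact_cast_ne_zero (F := F) (μ.erase r)
    have h3 := mfact_cast_ne_zero (F := F) ν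
    have h4 := count_cast_ne_zero (F := F) h
    field_simp
    rw [hm]
    ring
  · rw [if_neg h, Multiset.count_eq_zero_of_notMem h]
    simp

lemma gcomm (κ : ℕ+ → F) (r : ℕ+) (μ ν : Multiset ℕ+) :
    (aStar F μ * aLow F κ ν) * aNeg F r - aNeg F r * (aStar F μ * aLow F κ ν)
      = κ r • (if r ∈ ν then aStar F μ * aLow F κ (ν.erase r) else 0) := by
  have hP : Commute (aNeg F r) (opProd (aNeg F) (aNeg_commute F) μ) :=
    opProd_commute _ _ _ _ (fun i => aNeg_commute F r i)
  have haux : opProd (aNeg F) (aNeg_commute F) μ * opProd (aPos F κ) (aPos_commute F κ) ν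
        * aNeg F r
      - aNeg F r * (opProd (aNeg F) (aNeg_commute F) μ
        * opProd (aPos F κ) (aPos_commute F κ) ν)
      = opProd (aNeg F) (aNeg_commute F) μ
        * ((κ r * (ν.count r : F)) • opProd (aPos F κ) (aPos_commute F κ) (ν.erase r)) := by
    rw [mul_assoc, ← mul_assoc (aNeg F r), hP.eq, mul_assoc, ← mul_sub, comm2]
  rw [aStar, aLow]
  simp only [smul_mul_assoc, mul_smul_comm, smul_smul]
  rw [smul_sub', haux]
  by_cases h : r ∈ ν
  · rw [if_pos h, aLow]
    simp only [smul_mul_assoc, mul_smul_comm, smul_smul]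
    congr 1
    have hm : ((mfact ν : ℕ) : F) = ((ν.count r : ℕ) : F) * ((mfact (ν.erase r) : ℕ) : F) := by
      exact_mod_cast congrArg Nat.cast (mfact_erase h)
    have h1 := mfact_cast_ne_zero (F := F) ν
    have h2 := mfact_cast_ne_zero (F := F) (ν.erase r)
    have h3 := mfact_cast_ne_zero (F := F) μ
    have h4 := count_cast_ne_zero (F := F) h
    field_simp
    rw [hm]
    ring
  · rw [if_neg h, Multiset.count_eq_zero_of_notMem h]
    simp

end S7

namespace S7

open scoped TensorProduct

variable {F : Type*} [Field F] [CharZero F]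

lemma tmap_sub_left (f f' g : Module.End F (PP F)) :
    TensorProduct.map (f - f') g = TensorProduct.map f g - TensorProduct.map f' g := by
  apply TensorProduct.ext'
  intro x y
  simp [TensorProduct.sub_tmul]

lemma tmap_sub_right (f g g' : Module.End F (PP F)) :
    TensorProduct.map f (g - g') = TensorProduct.map f g - TensorProduct.map f g' := by
  apply TensorProduct.ext'
  intro x y
  simp [TensorProduct.tmul_sub]

lemma tmap_smul_left (a : F) (f g : Module.End F (PP F)) :
    TensorProduct.map (a • f) g = a • TensorProduct.map f g := by
  apply TensorProduct.ext'
  intro x y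
  simp [TensorProduct.smul_tmul']

lemma tmap_zero_left (g : Module.End F (PP F)) :
    TensorProduct.map (0 : Module.End F (PP F)) g = 0 := by
  apply TensorProduct.ext'
  intro x y
  simp

lemma tmap_zero_right (f : Module.End F (PP F)) :
    TensorProduct.map f (0 : Module.End F (PP F)) = 0 := by
  apply TensorProduct.ext'
  intro x y
  simp

lemma map_mul_op1 (f g h : Module.End F (PP F)) :
    TensorProduct.map f g * op1 F h = TensorProduct.map (f * h) g := by
  simp only [op1, Module.End.mul_eq_comp, ← TensorProduct.map_comp, LinearMap.comp_id]

lemma op1_mul_map (h f g : Module.End F (PP F)) :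
    op1 F h * TensorProduct.map f g = TensorProduct.map (h * f) g := by
  simp only [op1, Module.End.mul_eq_comp, ← TensorProduct.map_comp, LinearMap.id_comp]

lemma map_mul_op2 (f g h : Module.End F (PP F)) :
    TensorProduct.map f g * op2 F h = TensorProduct.map f (g * h) := by
  simp only [op2, Module.End.mul_eq_comp, ← TensorProduct.map_comp, LinearMap.comp_id,
    LinearMap.id_comp]

lemma op2_mul_map (h f g : Module.End F (PP F)) :
    op2 F h * TensorProduct.map f g = TensorProduct.map f (h * g) := by
  simp only [op2, Module.End.mul_eq_comp, ← TensorProduct.map_comp, LinearMap.comp_id,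
    LinearMap.id_comp]

lemma comb_aux1 (w : F) (A B M : Module.End F (PP F ⊗[F] PP F)) :
    (A + w • B) * M - M * (A + w • B) = (A * M - M * A) + w • (B * M - M * B) := by
  simp only [add_mul, mul_add, smul_mul_assoc, mul_smul_comm]
  module

lemma comb_aux2 (w : F) (A B M : Module.End F (PP F ⊗[F] PP F)) :
    M * (w • A + B) - (w • A + B) * M = w • (M * A - A * M) + (M * B - B * M) := by
  simp only [add_mul, mul_add, smul_mul_assoc, mul_smul_comm]
  module

/-- Commutator of `Mop` with `Δ(a_r)` (part (a)). -/
lemma Mcomm_a (κ : ℕ+ → F) (w : F) (r : ℕ+) (p : Q) :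
    (op1 F (aPos F κ r) + w • op2 F (aPos F κ r)) * Mop κ p
      - Mop κ p * (op1 F (aPos F κ r) + w • op2 F (aPos F κ r))
      = κ r • ((if r ∈ p.1 then Mop κ (p.1.erase r, p.2.1, p.2.2.1, p.2.2.2) else 0)
          + w • (if r ∈ p.2.1 then Mop κ (p.1, p.2.1.erase r, p.2.2.1, p.2.2.2) else 0)) := by
  obtain ⟨μ, ρ, ν, σ⟩ := p
  rw [comb_aux1]
  have e1 : op1 F (aPos F κ r) * Mop κ (μ, ρ, ν, σ) - Mop κ (μ, ρ, ν, σ) * op1 F (aPos F κ r)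
      = TensorProduct.map
          (aPos F κ r * (aStar F μ * aLow F κ ν) - (aStar F μ * aLow F κ ν) * aPos F κ r)
          (aStar F ρ * aLow F κ σ) := by
    rw [tmap_sub_left, Mop, op1_mul_map, map_mul_op1]
  have e2 : op2 F (aPos F κ r) * Mop κ (μ, ρ, ν, σ) - Mop κ (μ, ρ, ν, σ) * op2 F (aPos F κ r)
      = TensorProduct.map (aStar F μ * aLow F κ ν)
          (aPos F κ r * (aStar F ρ * aLow F κ σ) - (aStar F ρ * aLow F κ σ) * aPos F κ r) := by
    rw [tmap_sub_right, Mop, op2_mul_map, map_mul_op2]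
  rw [e1, e2, fcomm, fcomm, tmap_smul_left]
  have e3 : TensorProduct.map (aStar F μ * aLow F κ ν)
        (κ r • if r ∈ ρ then aStar F (ρ.erase r) * aLow F κ σ else 0)
      = κ r • TensorProduct.map (aStar F μ * aLow F κ ν)
          (if r ∈ ρ then aStar F (ρ.erase r) * aLow F κ σ else 0) := by
    split_ifs with h
    · apply TensorProduct.ext'
      intro x y
      simp [TensorProduct.tmul_smul]
    · rw [smul_zero, tmap_zero_right, smul_zero]
  rw [e3]
  have e4 : TensorProduct.map
        (if r ∈ μ then aStar F (μ.erase r) * aLow F κ ν else 0) (aStar F ρ * aLow F κ σ)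
      = (if r ∈ μ then Mop κ (μ.erase r, ρ, ν, σ) else 0) := by
    split_ifs with h
    · rfl
    · exact tmap_zero_left _
  have e5 : TensorProduct.map (aStar F μ * aLow F κ ν)
        (if r ∈ ρ then aStar F (ρ.erase r) * aLow F κ σ else 0)
      = (if r ∈ ρ then Mop κ (μ, ρ.erase r, ν, σ) else 0) := by
    split_ifs with h
    · rfl
    · exact tmap_zero_right _
  rw [e4, e5]
  module

/-- Commutator of `Mop` with `Δ(a_{-r})` (part (b)). -/
lemma Mcomm_b (κ : ℕ+ → F) (w : F) (r : ℕ+) (p : Q) :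
    Mop κ p * (w • op1 F (aNeg F r) + op2 F (aNeg F r))
      - (w • op1 F (aNeg F r) + op2 F (aNeg F r)) * Mop κ p
      = κ r • (w • (if r ∈ p.2.2.1 then Mop κ (p.1, p.2.1, p.2.2.1.erase r, p.2.2.2) else 0)
          + (if r ∈ p.2.2.2 then Mop κ (p.1, p.2.1, p.2.2.1, p.2.2.2.erase r) else 0)) := by
  obtain ⟨μ, ρ, ν, σ⟩ := p
  rw [comb_aux2]
  have e1 : Mop κ (μ, ρ, ν, σ) * op1 F (aNeg F r) - op1 F (aNeg F r) * Mop κ (μ, ρ, ν, σ)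
      = TensorProduct.map
          ((aStar F μ * aLow F κ ν) * aNeg F r - aNeg F r * (aStar F μ * aLow F κ ν))
          (aStar F ρ * aLow F κ σ) := by
    rw [tmap_sub_left, Mop, op1_mul_map, map_mul_op1]
  have e2 : Mop κ (μ, ρ, ν, σ) * op2 F (aNeg F r) - op2 F (aNeg F r) * Mop κ (μ, ρ, ν, σ)
      = TensorProduct.map (aStar F μ * aLow F κ ν)
          ((aStar F ρ * aLow F κ σ) * aNeg F r - aNeg F r * (aStar F ρ * aLow F κ σ)) := by
    rw [tmap_sub_right, Mop, op2_mul_map, map_mul_op2]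
  rw [e1, e2, gcomm, gcomm, tmap_smul_left]
  have e3 : TensorProduct.map (aStar F μ * aLow F κ ν)
        (κ r • if r ∈ σ then aStar F ρ * aLow F κ (σ.erase r) else 0)
      = κ r • TensorProduct.map (aStar F μ * aLow F κ ν)
          (if r ∈ σ then aStar F ρ * aLow F κ (σ.erase r) else 0) := by
    split_ifs with h
    · apply TensorProduct.ext'
      intro x y
      simp [TensorProduct.tmul_smul]
    · rw [smul_zero, tmap_zero_right, smul_zero]
  rw [e3]
  have e4 : TensorProduct.map
        (if r ∈ ν then aStar F μ * aLow F κ (ν.erase r) else 0) (aStar F ρ * aLow F κ σ)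
      = (if r ∈ ν then Mop κ (μ, ρ, ν.erase r, σ) else 0) := by
    split_ifs with h
    · rfl
    · exact tmap_zero_left _
  have e5 : TensorProduct.map (aStar F μ * aLow F κ ν)
        (if r ∈ σ then aStar F ρ * aLow F κ (σ.erase r) else 0)
      = (if r ∈ σ then Mop κ (μ, ρ, ν, σ.erase r) else 0) := by
    split_ifs with h
    · rfl
    · exact tmap_zero_right _
  rw [e4, e5]
  module

end S7

namespace S7

open scoped TensorProduct

variable {F : Type*} [Field F] [CharZero F]

set_option maxHeartbeats 1000000
set_option synthInstance.maxHeartbeats 400000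

lemma smul_sub2 (c : F) (A B : Module.End F (PP F ⊗[F] PP F)) :
    c • A - c • B = c • (A - B) := by module

lemma reindex (κ : ℕ+ → F) (c : Q →₀ F) (T P : Finset Q) (E I : Q → Q)
    (hPsub : P ⊆ c.support)
    (h1 : ∀ p ∈ P, I (E p) = p)
    (hmemP : ∀ p', c (I p') ≠ 0 → I p' ∈ P ∧ E (I p') = p')
    (hT : ∀ p', c (I p') ≠ 0 → p' ∈ T) :
    ∑ p ∈ P, c p • Mop κ (E p) = ∑ p' ∈ T, c (I p') • Mop κ p' := by
  have inj : ∀ x ∈ P, ∀ y ∈ P, E x = E y → x = y := fun x hx y hy he => by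
    rw [← h1 x hx, he, h1 y hy]
  have h2 : ∑ p' ∈ P.image E, c (I p') • Mop κ p'
      = ∑ p ∈ P, c (I (E p)) • Mop κ (E p) := Finset.sum_image inj
  have h3 : ∑ p ∈ P, c (I (E p)) • Mop κ (E p) = ∑ p ∈ P, c p • Mop κ (E p) :=
    Finset.sum_congr rfl fun p hp => by rw [h1 p hp]
  have h4 : P.image E ⊆ T := by
    intro p' hp'
    obtain ⟨p, hp, rfl⟩ := Finset.mem_image.mp hp'
    have hcne : c (I (E p)) ≠ 0 := by
      rw [h1 p hp]; exact Finsupp.mem_support_iff.mp (hPsub hp)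
    exact hT _ hcne
  have h5 : ∀ p' ∈ T, p' ∉ P.image E → c (I p') • Mop κ p' = 0 := by
    intro p' _ hnot
    rcases eq_or_ne (c (I p')) 0 with h | h
    · rw [h, zero_smul]
    · obtain ⟨hmem, heq⟩ := hmemP p' h
      exact absurd (Finset.mem_image.mpr ⟨I p', hmem, heq⟩) hnot
  rw [← h3, ← h2]
  exact Finset.sum_subset h4 h5

lemma sum_ite_filter (κ : ℕ+ → F) (c : Q →₀ F) (Pred : Q → Prop) [DecidablePred Pred]
    (E : Q → Q) :
    ∑ p ∈ c.support, c p • (if Pred p then Mop κ (E p) else 0)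
      = ∑ p ∈ c.support.filter Pred, c p • Mop κ (E p) := by
  rw [Finset.sum_filter]
  apply Finset.sum_congr rfl
  intro p _
  split_ifs <;> simp

/-- Part (a) of the theorem. -/
lemma part_a (q : F) (hq : q ≠ 0) (κ : ℕ+ → F) (hκ : ∀ r : ℕ+, κ r ≠ 0) (c : Q →₀ F)
    (hyp : ∀ r : ℕ+,
      Commute (Tmat F κ c) (op1 F (aPos F κ r) + (q⁻¹) ^ (r : ℕ) • op2 F (aPos F κ r)))
    (r : ℕ+) (μ ρ ν σ : Multiset ℕ+) :
    c (r ::ₘ μ, ρ, ν, σ) + (q⁻¹) ^ (r : ℕ) * c (μ, r ::ₘ ρ, ν, σ) = 0 := by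
  classical
  set w : F := (q⁻¹) ^ (r : ℕ) with hw
  set bb : Module.End F (PP F ⊗[F] PP F) :=
    op1 F (aPos F κ r) + w • op2 F (aPos F κ r) with hbb
  set E1 : Q → Q := fun p => (p.1.erase r, p.2.1, p.2.2.1, p.2.2.2) with hE1
  set I1 : Q → Q := fun p => (r ::ₘ p.1, p.2.1, p.2.2.1, p.2.2.2) with hI1
  set E2 : Q → Q := fun p => (p.1, p.2.1.erase r, p.2.2.1, p.2.2.2) with hE2
  set I2 : Q → Q := fun p => (p.1, r ::ₘ p.2.1, p.2.2.1, p.2.2.2) with hI2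
  set T : Finset Q := (c.support.filter fun p => r ∈ p.1).image E1
    ∪ (c.support.filter fun p => r ∈ p.2.1).image E2 with hT
  -- the two reindexed sums
  have hre1 : ∑ p ∈ c.support, c p • (if r ∈ p.1 then Mop κ (E1 p) else 0)
      = ∑ p' ∈ T, c (I1 p') • Mop κ p' := by
    rw [sum_ite_filter]
    apply reindex κ c T _ E1 I1 (Finset.filter_subset _ _)
    · rintro ⟨pμ, pρ, pν, pσ⟩ hp
      have hmem := (Finset.mem_filter.mp hp).2
      simp only [hE1, hI1]
      rw [Multiset.cons_erase hmem]
    · intro p' hne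
      constructor
      · apply Finset.mem_filter.mpr
        exact ⟨Finsupp.mem_support_iff.mpr hne, Multiset.mem_cons_self r _⟩
      · simp only [hE1, hI1, Multiset.erase_cons_head]
    · intro p' hne
      apply Finset.mem_union_left
      apply Finset.mem_image.mpr
      refine ⟨I1 p', ?_, by simp only [hE1, hI1, Multiset.erase_cons_head]⟩
      apply Finset.mem_filter.mpr
      exact ⟨Finsupp.mem_support_iff.mpr hne, Multiset.mem_cons_self r _⟩
  have hre2 : ∑ p ∈ c.support, c p • (if r ∈ p.2.1 then Mop κ (E2 p) else 0)
      = ∑ p' ∈ T, c (I2 p') • Mop κ p' := by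
    rw [sum_ite_filter]
    apply reindex κ c T _ E2 I2 (Finset.filter_subset _ _)
    · rintro ⟨pμ, pρ, pν, pσ⟩ hp
      have hmem := (Finset.mem_filter.mp hp).2
      simp only [hE2, hI2]
      rw [Multiset.cons_erase hmem]
    · intro p' hne
      constructor
      · apply Finset.mem_filter.mpr
        exact ⟨Finsupp.mem_support_iff.mpr hne, Multiset.mem_cons_self r _⟩
      · simp only [hE2, hI2, Multiset.erase_cons_head]
    · intro p' hne
      apply Finset.mem_union_right
      apply Finset.mem_image.mpr
      refine ⟨I2 p', ?_, by simp only [hE2, hI2, Multiset.erase_cons_head]⟩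
      apply Finset.mem_filter.mpr
      exact ⟨Finsupp.mem_support_iff.mpr hne, Multiset.mem_cons_self r _⟩
  -- the commutator vanishes
  have h0 : bb * Tmat F κ c - Tmat F κ c * bb = 0 :=
    sub_eq_zero_of_eq ((hyp r).symm.eq)
  -- expand the commutator as a sum
  have hsum : bb * Tmat F κ c - Tmat F κ c * bb
      = κ r • ((∑ p' ∈ T, c (I1 p') • Mop κ p') + w • ∑ p' ∈ T, c (I2 p') • Mop κ p') := by
    have e0 : bb * Tmat F κ c - Tmat F κ c * bb
        = ∑ p ∈ c.support, (bb * (c p • Mop κ p) - (c p • Mop κ p) * bb) := by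
      rw [Tmat_eq_sum, Finset.mul_sum, Finset.sum_mul]
      exact (Finset.sum_sub_distrib (s := c.support)
        (f := fun p => bb * (c p • Mop κ p)) (g := fun p => (c p • Mop κ p) * bb)).symm
    rw [e0]
    have hterm : ∀ p ∈ c.support,
        bb * (c p • Mop κ p) - (c p • Mop κ p) * bb
          = κ r • (c p • (if r ∈ p.1 then Mop κ (E1 p) else 0))
            + (κ r * w) • (c p • (if r ∈ p.2.1 then Mop κ (E2 p) else 0)) := by
      intro p _
      rw [mul_smul_comm, smul_mul_assoc, smul_sub2, Mcomm_a κ w r p]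
      module
    rw [Finset.sum_congr rfl hterm, Finset.sum_add_distrib]
    have e1 : ∑ p ∈ c.support, κ r • (c p • (if r ∈ p.1 then Mop κ (E1 p) else 0))
        = κ r • ∑ p ∈ c.support, c p • (if r ∈ p.1 then Mop κ (E1 p) else 0) :=
      (Finset.smul_sum).symm
    have e2 : ∑ p ∈ c.support, (κ r * w) • (c p • (if r ∈ p.2.1 then Mop κ (E2 p) else 0))
        = (κ r * w) • ∑ p ∈ c.support, c p • (if r ∈ p.2.1 then Mop κ (E2 p) else 0) :=
      (Finset.smul_sum).symm
    rw [e1, e2, hre1, hre2]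
    module
  rw [hsum] at h0
  have hinner : (∑ p' ∈ T, c (I1 p') • Mop κ p') + w • ∑ p' ∈ T, c (I2 p') • Mop κ p' = 0 := by
    have h1 := congrArg (fun z => (κ r)⁻¹ • z) h0
    simpa [smul_smul, ← mul_assoc, inv_mul_cancel₀ (hκ r)] using h1
  have hcomb : ∑ p' ∈ T, (c (I1 p') + w * c (I2 p')) • Mop κ p' = 0 := by
    rw [← hinner, Finset.smul_sum, ← Finset.sum_add_distrib]
    apply Finset.sum_congr rfl
    intro p _
    module
  have hz := li κ hκ T (fun p' => c (I1 p') + w * c (I2 p')) hcomb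
  by_cases hmem : ((μ, ρ, ν, σ) : Q) ∈ T
  · exact hz _ hmem
  · have hc1 : c (I1 (μ, ρ, ν, σ)) = 0 := by
      by_contra hne
      apply hmem
      apply Finset.mem_union_left
      apply Finset.mem_image.mpr
      refine ⟨I1 (μ, ρ, ν, σ), ?_, by simp only [hE1, hI1, Multiset.erase_cons_head]⟩
      apply Finset.mem_filter.mpr
      exact ⟨Finsupp.mem_support_iff.mpr hne, Multiset.mem_cons_self r _⟩
    have hc2 : c (I2 (μ, ρ, ν, σ)) = 0 := by
      by_contra hne
      apply hmem
      apply Finset.mem_union_right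
      apply Finset.mem_image.mpr
      refine ⟨I2 (μ, ρ, ν, σ), ?_, by simp only [hE2, hI2, Multiset.erase_cons_head]⟩
      apply Finset.mem_filter.mpr
      exact ⟨Finsupp.mem_support_iff.mpr hne, Multiset.mem_cons_self r _⟩
    simp only [hI1, hI2] at hc1 hc2
    rw [hc1, hc2]
    ring

end S7

namespace S7

open scoped TensorProduct

variable {F : Type*} [Field F] [CharZero F]

set_option maxHeartbeats 1000000
set_option synthInstance.maxHeartbeats 400000

/-- Part (b) of the theorem. -/
lemma part_b (q : F) (hq : q ≠ 0) (κ : ℕ+ → F) (hκ : ∀ r : ℕ+, κ r ≠ 0) (c : Q →₀ F)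
    (hyp : ∀ r : ℕ+,
      Commute (Tmat F κ c) (q ^ (r : ℕ) • op1 F (aNeg F r) + op2 F (aNeg F r)))
    (r : ℕ+) (μ ρ ν σ : Multiset ℕ+) :
    c (μ, ρ, r ::ₘ ν, σ) + (q⁻¹) ^ (r : ℕ) * c (μ, ρ, ν, r ::ₘ σ) = 0 := by
  classical
  set w : F := q ^ (r : ℕ) with hw
  set bb : Module.End F (PP F ⊗[F] PP F) :=
    w • op1 F (aNeg F r) + op2 F (aNeg F r) with hbb
  set E1 : Q → Q := fun p => (p.1, p.2.1, p.2.2.1.erase r, p.2.2.2) with hE1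
  set I1 : Q → Q := fun p => (p.1, p.2.1, r ::ₘ p.2.2.1, p.2.2.2) with hI1
  set E2 : Q → Q := fun p => (p.1, p.2.1, p.2.2.1, p.2.2.2.erase r) with hE2
  set I2 : Q → Q := fun p => (p.1, p.2.1, p.2.2.1, r ::ₘ p.2.2.2) with hI2
  set T : Finset Q := (c.support.filter fun p => r ∈ p.2.2.1).image E1
    ∪ (c.support.filter fun p => r ∈ p.2.2.2).image E2 with hT
  have hre1 : ∑ p ∈ c.support, c p • (if r ∈ p.2.2.1 then Mop κ (E1 p) else 0)
      = ∑ p' ∈ T, c (I1 p') • Mop κ p' := by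
    rw [sum_ite_filter]
    apply reindex κ c T _ E1 I1 (Finset.filter_subset _ _)
    · rintro ⟨pμ, pρ, pν, pσ⟩ hp
      have hmem := (Finset.mem_filter.mp hp).2
      simp only [hE1, hI1]
      rw [Multiset.cons_erase hmem]
    · intro p' hne
      constructor
      · apply Finset.mem_filter.mpr
        exact ⟨Finsupp.mem_support_iff.mpr hne, Multiset.mem_cons_self r _⟩
      · simp only [hE1, hI1, Multiset.erase_cons_head]
    · intro p' hne
      apply Finset.mem_union_left
      apply Finset.mem_image.mpr
      refine ⟨I1 p', ?_, by simp only [hE1, hI1, Multiset.erase_cons_head]⟩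
      apply Finset.mem_filter.mpr
      exact ⟨Finsupp.mem_support_iff.mpr hne, Multiset.mem_cons_self r _⟩
  have hre2 : ∑ p ∈ c.support, c p • (if r ∈ p.2.2.2 then Mop κ (E2 p) else 0)
      = ∑ p' ∈ T, c (I2 p') • Mop κ p' := by
    rw [sum_ite_filter]
    apply reindex κ c T _ E2 I2 (Finset.filter_subset _ _)
    · rintro ⟨pμ, pρ, pν, pσ⟩ hp
      have hmem := (Finset.mem_filter.mp hp).2
      simp only [hE2, hI2]
      rw [Multiset.cons_erase hmem]
    · intro p' hne
      constructor
      · apply Finset.mem_filter.mpr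
        exact ⟨Finsupp.mem_support_iff.mpr hne, Multiset.mem_cons_self r _⟩
      · simp only [hE2, hI2, Multiset.erase_cons_head]
    · intro p' hne
      apply Finset.mem_union_right
      apply Finset.mem_image.mpr
      refine ⟨I2 p', ?_, by simp only [hE2, hI2, Multiset.erase_cons_head]⟩
      apply Finset.mem_filter.mpr
      exact ⟨Finsupp.mem_support_iff.mpr hne, Multiset.mem_cons_self r _⟩
  have h0 : Tmat F κ c * bb - bb * Tmat F κ c = 0 :=
    sub_eq_zero_of_eq ((hyp r).eq)
  have hsum : Tmat F κ c * bb - bb * Tmat F κ c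
      = κ r • (w • (∑ p' ∈ T, c (I1 p') • Mop κ p') + ∑ p' ∈ T, c (I2 p') • Mop κ p') := by
    have e0 : Tmat F κ c * bb - bb * Tmat F κ c
        = ∑ p ∈ c.support, ((c p • Mop κ p) * bb - bb * (c p • Mop κ p)) := by
      rw [Tmat_eq_sum, Finset.mul_sum, Finset.sum_mul]
      exact (Finset.sum_sub_distrib (s := c.support)
        (f := fun p => (c p • Mop κ p) * bb) (g := fun p => bb * (c p • Mop κ p))).symm
    rw [e0]
    have hterm : ∀ p ∈ c.support,
        (c p • Mop κ p) * bb - bb * (c p • Mop κ p)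
          = (κ r * w) • (c p • (if r ∈ p.2.2.1 then Mop κ (E1 p) else 0))
            + κ r • (c p • (if r ∈ p.2.2.2 then Mop κ (E2 p) else 0)) := by
      intro p _
      rw [mul_smul_comm, smul_mul_assoc, smul_sub2, Mcomm_b κ w r p]
      module
    rw [Finset.sum_congr rfl hterm, Finset.sum_add_distrib]
    have e1 : ∑ p ∈ c.support, (κ r * w) • (c p • (if r ∈ p.2.2.1 then Mop κ (E1 p) else 0))
        = (κ r * w) • ∑ p ∈ c.support, c p • (if r ∈ p.2.2.1 then Mop κ (E1 p) else 0) :=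
      (Finset.smul_sum).symm
    have e2 : ∑ p ∈ c.support, κ r • (c p • (if r ∈ p.2.2.2 then Mop κ (E2 p) else 0))
        = κ r • ∑ p ∈ c.support, c p • (if r ∈ p.2.2.2 then Mop κ (E2 p) else 0) :=
      (Finset.smul_sum).symm
    rw [e1, e2, hre1, hre2]
    module
  rw [hsum] at h0
  have hinner : w • (∑ p' ∈ T, c (I1 p') • Mop κ p') + ∑ p' ∈ T, c (I2 p') • Mop κ p' = 0 := by
    have h1 := congrArg (fun z => (κ r)⁻¹ • z) h0
    simpa [smul_smul, ← mul_assoc, inv_mul_cancel₀ (hκ r)] using h1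
  have hcomb : ∑ p' ∈ T, (w * c (I1 p') + c (I2 p')) • Mop κ p' = 0 := by
    rw [← hinner, Finset.smul_sum, ← Finset.sum_add_distrib]
    apply Finset.sum_congr rfl
    intro p _
    module
  have hz := li κ hκ T (fun p' => w * c (I1 p') + c (I2 p')) hcomb
  have hw1 : (q⁻¹) ^ (r : ℕ) * w = 1 := by
    rw [hw, ← mul_pow, inv_mul_cancel₀ hq, one_pow]
  by_cases hmem : ((μ, ρ, ν, σ) : Q) ∈ T
  · have h := hz _ hmem
    have hgoal : c (μ, ρ, r ::ₘ ν, σ) + (q⁻¹) ^ (r : ℕ) * c (μ, ρ, ν, r ::ₘ σ)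
        = (q⁻¹) ^ (r : ℕ) * (w * c (I1 (μ, ρ, ν, σ)) + c (I2 (μ, ρ, ν, σ))) := by
      simp only [hI1, hI2]
      rw [mul_add, ← mul_assoc, hw1, one_mul]
    have h' : w * c (I1 (μ, ρ, ν, σ)) + c (I2 (μ, ρ, ν, σ)) = 0 := h
    rw [hgoal, h', mul_zero]
  · have hc1 : c (I1 (μ, ρ, ν, σ)) = 0 := by
      by_contra hne
      apply hmem
      apply Finset.mem_union_left
      apply Finset.mem_image.mpr
      refine ⟨I1 (μ, ρ, ν, σ), ?_, by simp only [hE1, hI1, Multiset.erase_cons_head]⟩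
      apply Finset.mem_filter.mpr
      exact ⟨Finsupp.mem_support_iff.mpr hne, Multiset.mem_cons_self r _⟩
    have hc2 : c (I2 (μ, ρ, ν, σ)) = 0 := by
      by_contra hne
      apply hmem
      apply Finset.mem_union_right
      apply Finset.mem_image.mpr
      refine ⟨I2 (μ, ρ, ν, σ), ?_, by simp only [hE2, hI2, Multiset.erase_cons_head]⟩
      apply Finset.mem_filter.mpr
      exact ⟨Finsupp.mem_support_iff.mpr hne, Multiset.mem_cons_self r _⟩
    simp only [hI1, hI2] at hc1 hc2
    rw [hc1, hc2]
    ring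

end S7

/-- operator form of Proposition 4.2: if `T` commutes with the Fock
images `Δ(a_r) = a_r ⊗ id + q^{−r}(id ⊗ a_r)` (resp. `Δ(a_{−r}) = q^r(a_{−r} ⊗ id) + id ⊗ a_{−r}`)
for every `r ≥ 1`, then the coefficients satisfy
`F(μ+{r},ρ,ν,σ) + q^{−r} F(μ,ρ+{r},ν,σ) = 0` (resp.
`F(μ,ρ,ν+{r},σ) + q^{−r} F(μ,ρ,ν,σ+{r}) = 0`). -/
theorem statement7 (F : Type*) [Field F] [CharZero F] (q : F) (hq : q ≠ 0)
    (κ : ℕ+ → F) (hκ : ∀ r : ℕ+, κ r ≠ 0)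
    (c : (Multiset ℕ+ × Multiset ℕ+ × Multiset ℕ+ × Multiset ℕ+) →₀ F) :
    ((∀ r : ℕ+,
        Commute (Tmat F κ c) (op1 F (aPos F κ r) + (q⁻¹) ^ (r : ℕ) • op2 F (aPos F κ r))) →
      ∀ (r : ℕ+) (μ ρ ν σ : Multiset ℕ+),
        c (r ::ₘ μ, ρ, ν, σ) + (q⁻¹) ^ (r : ℕ) * c (μ, r ::ₘ ρ, ν, σ) = 0) ∧
    ((∀ r : ℕ+,
        Commute (Tmat F κ c) (q ^ (r : ℕ) • op1 F (aNeg F r) + op2 F (aNeg F r))) →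
      ∀ (r : ℕ+) (μ ρ ν σ : Multiset ℕ+),
        c (μ, ρ, r ::ₘ ν, σ) + (q⁻¹) ^ (r : ℕ) * c (μ, ρ, ν, r ::ₘ σ) = 0) := by
  constructor
  · intro hyp r μ ρ ν σ
    exact S7.part_a q hq κ hκ c hyp r μ ρ ν σ
  · intro hyp r μ ρ ν σ
    exact S7.part_b q hq κ hκ c hyp r μ ρ ν σ
end
end

section
/- (Functional equation characterizing the single-variable Macdonald Cauchy kernel, eq. (5.15) of the paper.) Let A be a commutative ℚ-algebra and q, t ∈ A such that 1 − q^r is invertible in A for every r ≥ 1. Define Π := exp(∑_{r≥1} ((1−t^r)/(r(1−q^r))) · u^r) ∈ A[[u]], where exp(f) := ∑_{n≥0} f^n/n! for f with zero constant term. Then (1 − u)·Π = (1 − t u)·Π(qu), where Π(qu) denotes the power series obtained from Π by the rescaling u ↦ qu (Mathlib: PowerSeries.rescale q Π). This functional equation encodes the product formula Π = (tu;q)_∞/(u;q)_∞ for the Cauchy kernel. -/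
/-- The exponential `exp(f) := ∑_{n≥0} f^n/n!` of a formal power series `f` with zero
constant term over a commutative `ℚ`-algebra. -/
noncomputable def expPS {A : Type*} [CommRing A] [Algebra ℚ A] (f : PowerSeries A) :
    PowerSeries A :=
  PowerSeries.mk fun d =>
    ∑ n ∈ Finset.range (d + 1), ((n.factorial : ℚ))⁻¹ • PowerSeries.coeff d (f ^ n)

/-- The single-variable Macdonald Cauchy kernel
`Π := exp(∑_{r≥1} ((1−t^r)/(r(1−q^r))) u^r)`, where `1/(1−q^r)` is `Ring.inverse`
(the genuine inverse whenever `1 − q^r` is a unit). -/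
noncomputable def cauchyKernel {A : Type*} [CommRing A] [Algebra ℚ A] (q t : A) :
    PowerSeries A :=
  expPS (PowerSeries.mk fun r =>
    if r = 0 then 0 else ((r : ℚ))⁻¹ • ((1 - t ^ r) * Ring.inverse (1 - q ^ r)))

open PowerSeries

set_option linter.unusedSectionVars false

section Helpers

variable {A : Type*} [CommRing A] [Algebra ℚ A]

-- torsion-free instance
theorem nsmul_free : NoZeroSMulDivisors ℕ A := by
  constructor
  intro n a hna
  rcases eq_or_ne n 0 with hn | hn
  · exact Or.inl hn
  · right
    have hu : IsUnit ((n : A)) := by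
      have := (IsUnit.map (algebraMap ℚ A) (isUnit_iff_ne_zero.2 (by exact_mod_cast hn : (n:ℚ) ≠ 0)))
      simpa using this
    have : (n : A) * a = 0 := by rw [← nsmul_eq_mul]; exact hna
    exact (hu.mul_right_eq_zero).1 this

-- coefficient of pow vanishes below order
theorem coeff_pow_zero {f : PowerSeries A} (hf : constantCoeff f = 0)
    {d n : ℕ} (hdn : d < n) : PowerSeries.coeff d (f ^ n) = 0 := by
  obtain ⟨g, rfl⟩ := PowerSeries.X_dvd_iff.2 hf
  rw [mul_pow, mul_comm, PowerSeries.coeff_mul_X_pow', if_neg (by omega)]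
/-- partial sum -/
noncomputable def eS (f : PowerSeries A) (D : ℕ) : PowerSeries A :=
  ∑ n ∈ Finset.range (D + 1), ((n.factorial : ℚ))⁻¹ • f ^ n

theorem coeff_eS (f : PowerSeries A) (D d : ℕ) :
    PowerSeries.coeff d (eS f D) =
      ∑ n ∈ Finset.range (D + 1), ((n.factorial : ℚ))⁻¹ • PowerSeries.coeff d (f ^ n) := by
  rw [eS, map_sum]
  exact Finset.sum_congr rfl fun n _ => PowerSeries.coeff_smul d _ _

theorem coeff_expPS_eq_eS {f : PowerSeries A} (hf : constantCoeff f = 0)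
    {d D : ℕ} (hdD : d ≤ D) :
    PowerSeries.coeff d (expPS f) = PowerSeries.coeff d (eS f D) := by
  rw [expPS, PowerSeries.coeff_mk, coeff_eS]
  refine Finset.sum_subset (by intro x hx; simp at hx ⊢; omega) ?_
  intro n hn hn'
  simp only [Finset.mem_range] at hn hn'
  rw [coeff_pow_zero hf (by omega), smul_zero]

theorem derivative_qsmul (c : ℚ) (f : PowerSeries A) :
    d⁄dX A (c • f) = c • d⁄dX A f := by
  ext n
  rw [PowerSeries.coeff_derivative, PowerSeries.coeff_smul, PowerSeries.coeff_smul,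
    PowerSeries.coeff_derivative, smul_mul_assoc]

theorem derivative_eS_succ (f : PowerSeries A) (D : ℕ) :
    d⁄dX A (eS f (D + 1)) = d⁄dX A f * eS f D := by
  rw [eS, map_sum, Finset.sum_range_succ']
  have h0 : d⁄dX A (((Nat.factorial 0 : ℚ))⁻¹ • f ^ 0) = 0 := by
    simp [derivative_qsmul]
  rw [h0, add_zero, eS, Finset.mul_sum]
  refine Finset.sum_congr rfl fun i _ => ?_
  rw [derivative_qsmul, Derivation.leibniz_pow]
  rw [mul_smul_comm]
  rw [← Nat.cast_smul_eq_nsmul ℚ (i + 1), smul_smul, Nat.add_sub_cancel, smul_eq_mul,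
    mul_comm (f ^ i)]
  congr 1
  rw [Nat.factorial_succ]
  push_cast
  rw [mul_inv]
  field_simp

theorem constantCoeff_expPS (f : PowerSeries A) :
    constantCoeff (expPS f) = 1 := by
  have : constantCoeff (expPS f) = PowerSeries.coeff 0 (expPS f) := by
    rw [PowerSeries.coeff_zero_eq_constantCoeff]
  rw [this, expPS, PowerSeries.coeff_mk]
  simp

theorem derivative_expPS {f : PowerSeries A} (hf : constantCoeff f = 0) :
    d⁄dX A (expPS f) = d⁄dX A f * expPS f := by
  ext d
  rw [PowerSeries.coeff_derivative, coeff_expPS_eq_eS hf (Nat.le_refl (d+1)),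
    ← PowerSeries.coeff_derivative, derivative_eS_succ]
  rw [PowerSeries.coeff_mul, PowerSeries.coeff_mul]
  refine Finset.sum_congr rfl fun p hp => ?_
  congr 1
  exact (coeff_expPS_eq_eS hf (by
    have := Finset.HasAntidiagonal.antidiagonal.snd_le hp
    omega)).symm

theorem derivative_rescale (a : A) (f : PowerSeries A) :
    d⁄dX A (PowerSeries.rescale a f) = PowerSeries.C a * PowerSeries.rescale a (d⁄dX A f) := by
  ext n
  rw [PowerSeries.coeff_derivative, PowerSeries.coeff_rescale, PowerSeries.coeff_C_mul,
    PowerSeries.coeff_rescale, PowerSeries.coeff_derivative, pow_succ]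
  ring

/-- geometric series -/
theorem geo_inv (a : A) :
    (1 - PowerSeries.C a * PowerSeries.X) * (PowerSeries.mk fun n => a ^ n) = 1 := by
  ext n
  rw [sub_mul, one_mul, mul_assoc, map_sub, PowerSeries.coeff_C_mul]
  cases n with
  | zero => simp
  | succ k =>
    rw [PowerSeries.coeff_succ_X_mul, PowerSeries.coeff_mk, PowerSeries.coeff_mk,
      PowerSeries.coeff_one, pow_succ]
    simp [mul_comm]

theorem ode_uniq {F G : PowerSeries A} (hF : constantCoeff F = 1)
    (hG : constantCoeff G = 1) (hFG : d⁄dX A F * G = F * d⁄dX A G) : F = G := by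
  haveI := nsmul_free (A := A)
  haveI : IsAddTorsionFree A := .of_module_rat _
  have hGu : IsUnit G := PowerSeries.isUnit_iff_constantCoeff.2 (by rw [hG]; exact isUnit_one)
  obtain ⟨u, rfl⟩ := hGu
  have he : (↑u⁻¹ : PowerSeries A) * ↑u = 1 := by exact_mod_cast u.inv_mul
  have hH0 : constantCoeff (F * (↑u⁻¹ : PowerSeries A)) = 1 := by
    have h1 : constantCoeff ((↑u⁻¹ : PowerSeries A) * (↑u : PowerSeries A)) = 1 := by rw [he, map_one]
    rw [map_mul] at h1 ⊢
    rw [hG, mul_one] at h1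
    rw [hF, one_mul, h1]
  have hHd : d⁄dX A (F * (↑u⁻¹ : PowerSeries A)) = d⁄dX A (1 : PowerSeries A) := by
    rw [Derivation.leibniz, PowerSeries.derivative_inv]
    simp only [smul_eq_mul, Derivation.map_one_eq_zero]
    linear_combination (↑u⁻¹ : PowerSeries A) ^ 2 * hFG -
      ((↑u⁻¹ : PowerSeries A) * d⁄dX A F) * he
  have hH : F * (↑u⁻¹ : PowerSeries A) = 1 := PowerSeries.derivative.ext hHd (by rw [hH0, map_one])
  calc F = F * ((↑u⁻¹ : PowerSeries A) * ↑u) := by rw [he, mul_one]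
    _ = (F * (↑u⁻¹ : PowerSeries A)) * ↑u := by ring
    _ = ↑u := by rw [hH, one_mul]

theorem key_identity (q t : A) (h : ∀ r : ℕ, 1 ≤ r → IsUnit (1 - q ^ r)) :
    (1 - PowerSeries.X) * (1 - PowerSeries.C t * PowerSeries.X) *
      (d⁄dX A (PowerSeries.mk fun r =>
          if r = 0 then 0 else ((r : ℚ))⁻¹ • ((1 - t ^ r) * Ring.inverse (1 - q ^ r))) -
        d⁄dX A (PowerSeries.rescale q (PowerSeries.mk fun r =>
          if r = 0 then 0 else ((r : ℚ))⁻¹ • ((1 - t ^ r) * Ring.inverse (1 - q ^ r))))) =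
      1 - PowerSeries.C t := by
  set φ : PowerSeries A := PowerSeries.mk fun r =>
      if r = 0 then 0 else ((r : ℚ))⁻¹ • ((1 - t ^ r) * Ring.inverse (1 - q ^ r)) with hφ
  have hδ : φ - PowerSeries.rescale q φ =
      PowerSeries.mk fun r => if r = 0 then 0 else ((r : ℚ))⁻¹ • (1 - t ^ r) := by
    ext r
    rw [map_sub, PowerSeries.coeff_rescale, hφ, PowerSeries.coeff_mk, PowerSeries.coeff_mk]
    cases r with
    | zero => simp
    | succ k =>
      rw [if_neg (Nat.succ_ne_zero k), if_neg (Nat.succ_ne_zero k)]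
      have hu := h (k + 1) (by omega)
      have h2 : ∀ c : A, c - q ^ (k + 1) * c = (1 - q ^ (k + 1)) * c := fun c => by ring
      rw [h2, mul_smul_comm]
      congr 1
      rw [mul_comm (1 - t ^ (k + 1)), ← mul_assoc, Ring.mul_inverse_cancel _ hu, one_mul]
  have hδ' : d⁄dX A (φ - PowerSeries.rescale q φ) =
      (PowerSeries.mk fun n => (1 : A) ^ n) -
        PowerSeries.C t * PowerSeries.mk fun n => t ^ n := by
    rw [hδ]
    ext n
    rw [PowerSeries.coeff_derivative, PowerSeries.coeff_mk, if_neg (Nat.succ_ne_zero n),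
      map_sub, PowerSeries.coeff_C_mul, PowerSeries.coeff_mk, PowerSeries.coeff_mk]
    have hc : ((n : A) + 1) = algebraMap ℚ A ((n : ℚ) + 1) := by simp
    have hq : (((n + 1 : ℕ) : ℚ))⁻¹ * ((n : ℚ) + 1) = 1 := by
      push_cast
      exact inv_mul_cancel₀ (by positivity)
    rw [hc, Algebra.smul_def, mul_right_comm, ← map_mul, hq, map_one, one_mul,
      one_pow, pow_succ]
    ring
  have g1 : (1 - PowerSeries.X) * (PowerSeries.mk fun n => (1 : A) ^ n) = 1 := by
    simpa using geo_inv (1 : A)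
  have g2 := geo_inv t
  rw [← map_sub, hδ']
  linear_combination (1 - PowerSeries.C t * PowerSeries.X) * g1 -
    PowerSeries.C t * (1 - PowerSeries.X) * g2

end Helpers

/-- functional equation characterizing the single-variable Macdonald
Cauchy kernel, eq. (5.15) of the paper: if `1 − q^r` is invertible for every `r ≥ 1`,
then `(1 − u)·Π = (1 − t u)·Π(qu)`. -/
theorem statement12 (A : Type*) [CommRing A] [Algebra ℚ A] (q t : A)
    (h : ∀ r : ℕ, 1 ≤ r → IsUnit (1 - q ^ r)) :
    (1 - PowerSeries.X) * cauchyKernel q t =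
      (1 - PowerSeries.C t * PowerSeries.X) *
        PowerSeries.rescale q (cauchyKernel q t) := by
  have hK := key_identity q t h
  set φ : PowerSeries A := PowerSeries.mk fun r =>
      if r = 0 then 0 else ((r : ℚ))⁻¹ • ((1 - t ^ r) * Ring.inverse (1 - q ^ r)) with hφ
  have hφ0 : constantCoeff φ = 0 := by
    rw [hφ, ← PowerSeries.coeff_zero_eq_constantCoeff, PowerSeries.coeff_mk]
    simp
  set Φ : PowerSeries A := cauchyKernel q t with hΦ
  have hΦdef : Φ = expPS φ := rfl
  set Ψ : PowerSeries A := PowerSeries.rescale q Φ with hΨ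
  have hΦ' : d⁄dX A Φ = d⁄dX A φ * Φ := by rw [hΦdef]; exact derivative_expPS hφ0
  have hΨ' : d⁄dX A Ψ = d⁄dX A (PowerSeries.rescale q φ) * Ψ := by
    rw [hΨ, derivative_rescale, hΦ', map_mul, derivative_rescale, mul_assoc]
  have hΦ0 : constantCoeff Φ = 1 := by rw [hΦdef]; exact constantCoeff_expPS φ
  have hΨ0 : constantCoeff Ψ = 1 := by
    rw [hΨ, ← PowerSeries.coeff_zero_eq_constantCoeff, PowerSeries.coeff_rescale, pow_zero,
      one_mul, PowerSeries.coeff_zero_eq_constantCoeff, hΦ0]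
  have h1X : d⁄dX A (1 - PowerSeries.X : PowerSeries A) = -1 := by
    rw [map_sub, PowerSeries.derivative_X, Derivation.map_one_eq_zero, zero_sub]
  have h1tX : d⁄dX A (1 - PowerSeries.C t * PowerSeries.X) = -(PowerSeries.C t) := by
    rw [map_sub, Derivation.map_one_eq_zero, Derivation.leibniz, PowerSeries.derivative_X,
      PowerSeries.derivative_C]
    simp
  apply ode_uniq
  · rw [map_mul, hΦ0, mul_one]
    simp
  · rw [map_mul, hΨ0, mul_one]
    simp
  · rw [Derivation.leibniz, Derivation.leibniz, hΦ', hΨ', h1X, h1tX]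
    simp only [smul_eq_mul]
    linear_combination Φ * Ψ * hK
end
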